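/- arXiv:1406.4022 — 6 statements merged into one kernel-verified Lean document; each statement's English description precedes it below -/
import Mathlib

section
/- For positive integers n and j with j ≤ n, the sum over k from j to n of [n choose k]_q (-1)^k q^{binom(k,2)} equals [n-1 choose j-1]_q (-1)^j q^{binom(j,2)}, where binom(k,2)=k(k-1)/2. -/
/-- The Gaussian `q`-binomial coefficient `[n choose k]_q = ∏_{i=1}^k (1-q^{n-k+i})/(1-q^i)`. -/
noncomputable def qbinom (q : ℂ) (n k : ℕ) : ℂ :=
  ∏ i ∈ Finset.range k, (1 - q ^ (n - k + 1 + i)) / (1 - q ^ (1 + i))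

lemma qbinom_self (q : ℂ) (m : ℕ) (hq : ∀ i, 1 ≤ i → i ≤ m → q ^ i ≠ 1) :
    qbinom q m m = 1 := by
  unfold qbinom
  apply Finset.prod_eq_one
  intro i hi
  rw [Finset.mem_range] at hi
  rw [Nat.sub_self, Nat.zero_add]
  exact div_self (sub_ne_zero.mpr fun h => hq (1 + i) (by omega) (by omega) h.symm)

lemma qbinom_pascal (q : ℂ) (n j : ℕ) (h1 : 1 ≤ j) (h2 : j ≤ n - 1) (hn : 1 ≤ n)
    (hq : ∀ i, 1 ≤ i → i ≤ j → q ^ i ≠ 1) :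
    qbinom q n j = qbinom q (n - 1) (j - 1) + q ^ j * qbinom q (n - 1) j := by
  obtain ⟨m, rfl⟩ : ∃ m, n = m + 1 := ⟨n - 1, by omega⟩
  obtain ⟨t, rfl⟩ : ∃ t, j = t + 1 := ⟨j - 1, by omega⟩
  simp only [Nat.add_sub_cancel]
  have ht : t + 1 ≤ m := by omega
  have hDsucc : ∏ i ∈ Finset.range (t + 1), (1 - q ^ (1 + i))
      = (∏ i ∈ Finset.range t, (1 - q ^ (1 + i))) * (1 - q ^ (t + 1)) := by
    rw [Finset.prod_range_succ, add_comm 1 t]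
  have e1 : qbinom q (m + 1) (t + 1)
      = ((∏ i ∈ Finset.range t, (1 - q ^ (m - t + 1 + i))) * (1 - q ^ (m + 1)))
        / ((∏ i ∈ Finset.range t, (1 - q ^ (1 + i))) * (1 - q ^ (t + 1))) := by
    unfold qbinom
    rw [Finset.prod_div_distrib, hDsucc]
    simp only [Nat.succ_sub_succ_eq_sub]
    rw [Finset.prod_range_succ, show m - t + 1 + t = m + 1 by omega]
  have e2 : qbinom q m t
      = (∏ i ∈ Finset.range t, (1 - q ^ (m - t + 1 + i)))
        / (∏ i ∈ Finset.range t, (1 - q ^ (1 + i))) := by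
    unfold qbinom
    rw [Finset.prod_div_distrib]
  have e3 : qbinom q m (t + 1)
      = ((1 - q ^ (m - t)) * ∏ i ∈ Finset.range t, (1 - q ^ (m - t + 1 + i)))
        / ((∏ i ∈ Finset.range t, (1 - q ^ (1 + i))) * (1 - q ^ (t + 1))) := by
    unfold qbinom
    rw [Finset.prod_div_distrib, hDsucc]
    congr 1
    rw [Finset.prod_range_succ', mul_comm]
    congr 1
    · rw [show m - (t + 1) + 1 + 0 = m - t by omega]
    · apply Finset.prod_congr rfl
      intro i _
      rw [show m - (t + 1) + 1 + (i + 1) = m - t + 1 + i by omega]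
  have hDne : (∏ i ∈ Finset.range t, (1 - q ^ (1 + i))) ≠ 0 := by
    apply Finset.prod_ne_zero_iff.mpr
    intro i hi
    rw [Finset.mem_range] at hi
    exact sub_ne_zero.mpr fun h => hq (1 + i) (by omega) (by omega) h.symm
  have htne : (1 : ℂ) - q ^ (t + 1) ≠ 0 :=
    sub_ne_zero.mpr fun h => hq (t + 1) (by omega) le_rfl h.symm
  rw [e1, e2, e3, show q ^ (m + 1) = q ^ (t + 1) * q ^ (m - t) by rw [← pow_add]; congr 1; omega]
  field_simp
  ring

theorem stmt_1 (n j : ℕ) (hj : 1 ≤ j) (hjn : j ≤ n) (q : ℂ)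
    (hq : ∀ i, 1 ≤ i → i ≤ n → q ^ i ≠ 1) :
    ∑ k ∈ Finset.Icc j n, qbinom q n k * (-1) ^ k * q ^ (Nat.choose k 2)
      = qbinom q (n - 1) (j - 1) * (-1) ^ j * q ^ (Nat.choose j 2) := by
  obtain ⟨d, hd⟩ : ∃ d, j + d = n := ⟨n - j, by omega⟩
  clear hjn
  induction d generalizing j with
  | zero =>
    have : j = n := by omega
    subst this
    rw [Finset.Icc_self, Finset.sum_singleton, qbinom_self q j hq,
      qbinom_self q (j - 1) (fun i h1 h2 => hq i h1 (by omega))]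
  | succ d ih =>
    have hins : Finset.Icc j n = insert j (Finset.Icc (j + 1) n) := by
      rw [Finset.Icc_add_one_left_eq_Ioc, Finset.Ioc_insert_left (by omega)]
    rw [hins, Finset.sum_insert (by simp), ih (j + 1) (by omega) (by omega)]
    have hch : Nat.choose (j + 1) 2 = Nat.choose j 2 + j := by
      rw [Nat.choose_succ_succ j 1, Nat.choose_one_right, Nat.add_comm]
    rw [Nat.add_sub_cancel, hch,
      qbinom_pascal q n j hj (by omega) (by omega) (fun i h1 h2 => hq i h1 (by omega))]
    rw [pow_add, pow_succ]
    ring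
end

section
/- Let {a_n} and {b_n} be sequences (in a commutative ring containing q and the inverses of the q-integers [k]_q) related by the q-binomial transform b_n = ∑_{k=1}^n [n choose k]_q (-1)^k q^{binom(k,2)} a_k. Then for any positive integer r, ∑_{k=1}^n [n choose k]_q (-1)^k q^{binom(k,2)+rk} a_k / [k]_q^r = ∑_{1≤k_1≤k_2≤⋯≤k_r≤n} (∏_{i=1}^r q^{k_i}/[k_i]_q) · b_{k_1}. -/
open scoped Classical

/-- The `q`-integer `[k]_q = (1-q^k)/(1-q)`. -/
noncomputable def qint (q : ℂ) (k : ℕ) : ℂ := (1 - q ^ k) / (1 - q)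

namespace QBinomAux

open Finset

lemma qbinom_eq (q : ℂ) (n k : ℕ) :
    qbinom q n k = (∏ i ∈ range k, (1 - q ^ (n - k + 1 + i))) / (∏ i ∈ range k, (1 - q ^ (1 + i))) :=
  Finset.prod_div_distrib _ _

lemma D_ne_zero {q : ℂ} {k : ℕ} (hq : ∀ i, 1 ≤ i → i ≤ k → q ^ i ≠ 1) :
    (∏ i ∈ range k, (1 - q ^ (1 + i))) ≠ 0 := by
  apply Finset.prod_ne_zero_iff.mpr
  intro i hi
  rw [Finset.mem_range] at hi
  exact sub_ne_zero.mpr fun h => hq (1 + i) (by omega) (by omega) h.symm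

lemma qbinom_self {q : ℂ} {k : ℕ} (hq : ∀ i, 1 ≤ i → i ≤ k → q ^ i ≠ 1) :
    qbinom q k k = 1 := by
  unfold qbinom
  rw [Finset.prod_eq_one]
  intro i hi
  rw [Finset.mem_range] at hi
  have : k - k + 1 + i = 1 + i := by omega
  rw [this]
  exact div_self (sub_ne_zero.mpr fun h => hq (1 + i) (by omega) (by omega) h.symm)

lemma qbinom_A {q : ℂ} {n k : ℕ} (hkn : k ≤ n) (hq : ∀ i, 1 ≤ i → i ≤ k + 1 → q ^ i ≠ 1) :
    qbinom q (n + 1) (k + 1) * (1 - q ^ (k + 1)) = (1 - q ^ (n + 1)) * qbinom q n k := by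
  rw [qbinom_eq, qbinom_eq]
  rw [show n + 1 - (k + 1) = n - k from by omega]
  have h1 : ∏ i ∈ range (k+1), (1 - q ^ (n - k + 1 + i))
      = (∏ i ∈ range k, (1 - q ^ (n - k + 1 + i))) * (1 - q ^ (n + 1)) := by
    rw [Finset.prod_range_succ, show n - k + 1 + k = n + 1 from by omega]
  have h2 : ∏ i ∈ range (k+1), (1 - q ^ (1 + i))
      = (∏ i ∈ range k, (1 - q ^ (1 + i))) * (1 - q ^ (k + 1)) := by
    rw [Finset.prod_range_succ, show 1 + k = k + 1 from by omega]
  rw [h1, h2]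
  have hD : (∏ i ∈ range k, (1 - q ^ (1 + i))) ≠ 0 :=
    D_ne_zero (fun i h1 h2 => hq i h1 (by omega))
  have hk1 : (1 - q ^ (k + 1)) ≠ 0 := sub_ne_zero.mpr fun h => hq (k+1) (by omega) le_rfl h.symm
  field_simp

lemma qbinom_B {q : ℂ} {n k : ℕ} (hkn : k + 1 ≤ n) (hq : ∀ i, 1 ≤ i → i ≤ k + 1 → q ^ i ≠ 1) :
    qbinom q (n + 1) (k + 1) - qbinom q n (k + 1) = q ^ (n - k) * qbinom q n k := by
  rw [qbinom_eq, qbinom_eq, qbinom_eq]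
  rw [show n + 1 - (k + 1) = n - k from by omega, show n - (k + 1) + 1 = n - k from by omega]
  have h1 : ∏ i ∈ range (k+1), (1 - q ^ (n - k + 1 + i))
      = (∏ i ∈ range k, (1 - q ^ (n - k + 1 + i))) * (1 - q ^ (n + 1)) := by
    rw [Finset.prod_range_succ, show n - k + 1 + k = n + 1 from by omega]
  have h2 : ∏ i ∈ range (k+1), (1 - q ^ (n - k + i))
      = (∏ i ∈ range k, (1 - q ^ (n - k + 1 + i))) * (1 - q ^ (n - k)) := by
    rw [Finset.prod_range_succ', show n - k + 0 = n - k from by omega]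
    congr 1
    exact Finset.prod_congr rfl fun i _ => by rw [show n - k + (i + 1) = n - k + 1 + i from by omega]
  have h3 : ∏ i ∈ range (k+1), (1 - q ^ (1 + i))
      = (∏ i ∈ range k, (1 - q ^ (1 + i))) * (1 - q ^ (k + 1)) := by
    rw [Finset.prod_range_succ, show 1 + k = k + 1 from by omega]
  rw [h1, h2, h3]
  have hD : (∏ i ∈ range k, (1 - q ^ (1 + i))) ≠ 0 :=
    D_ne_zero (fun i h1 h2 => hq i h1 (by omega))
  have hk1 : (1 - q ^ (k + 1)) ≠ 0 := sub_ne_zero.mpr fun h => hq (k+1) (by omega) le_rfl h.symm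
  have hpow : q ^ (n + 1) = q ^ (n - k) * q ^ (k + 1) := by
    rw [← pow_add]; congr 1; omega
  field_simp
  rw [hpow]
  ring

lemma qint_ne_zero {q : ℂ} {k : ℕ} (hq1 : q ≠ 1) (hk : q ^ k ≠ 1) : qint q k ≠ 0 :=
  div_ne_zero (sub_ne_zero.mpr fun h => hk h.symm) (sub_ne_zero.mpr fun h => hq1 h.symm)

lemma key_sum {q : ℂ} {N : ℕ} (hq : ∀ i, 1 ≤ i → i ≤ N → q ^ i ≠ 1) (k : ℕ) (hk : 1 ≤ k) :
    ∀ n, k ≤ n → n ≤ N →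
    ∑ m ∈ Icc k n, q ^ m / qint q m * qbinom q m k = q ^ k / qint q k * qbinom q n k := by
  intro n hkn0
  induction n, hkn0 using Nat.le_induction with
  | base =>
    intro hN
    rw [Finset.Icc_self, Finset.sum_singleton]
  | succ n hkn ih =>
    intro hN
    have hq1 : q ≠ 1 := by
      have := hq 1 le_rfl (by omega); simpa using this
    obtain ⟨k', rfl⟩ : ∃ k', k = k' + 1 := ⟨k - 1, by omega⟩
    rw [Finset.sum_Icc_succ_top (by omega), ih (by omega)]
    have hq' : ∀ i, 1 ≤ i → i ≤ k' + 1 → q ^ i ≠ 1 := fun i h1 h2 => hq i h1 (by omega)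
    have hA := qbinom_A (n := n) (k := k') (by omega) hq'
    have hBn : qint q (n+1) ≠ 0 := qint_ne_zero hq1 (hq (n+1) (by omega) hN)
    have hBk : qint q (k'+1) ≠ 0 := qint_ne_zero hq1 (hq (k'+1) (by omega) (by omega))
    have hn1 : (1 : ℂ) - q ^ (n+1) ≠ 0 := sub_ne_zero.mpr fun h => hq (n+1) (by omega) hN h.symm
    have hk1 : (1 : ℂ) - q ^ (k'+1) ≠ 0 := sub_ne_zero.mpr fun h => hq (k'+1) (by omega) (by omega) h.symm
    have hq1' : (1 : ℂ) - q ≠ 0 := sub_ne_zero.mpr fun h => hq1 h.symm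
    have hB := qbinom_B (n := n) (k := k') hkn hq'
    have hX : qbinom q (n+1) (k'+1) = (1 - q^(n+1)) * qbinom q n k' / (1 - q^(k'+1)) := by
      rw [eq_div_iff hk1]; exact hA
    have hpow : q ^ (n + 1) = q ^ (n - k') * q ^ (k' + 1) := by
      rw [← pow_add]; congr 1; omega
    have hgoal : q^(n+1)/qint q (n+1) * qbinom q (n+1) (k'+1)
        = q^(k'+1)/qint q (k'+1) * (qbinom q (n+1) (k'+1) - qbinom q n (k'+1)) := by
      rw [hB, hX]
      unfold qint
      field_simp
      rw [hpow]
      ring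
    linear_combination hgoal

lemma L_step {q : ℂ} {n : ℕ} (hq : ∀ i, 1 ≤ i → i ≤ n → q ^ i ≠ 1) (c : ℕ → ℂ) :
    ∑ k ∈ Icc 1 n, qbinom q n k * (-1) ^ k * q ^ (Nat.choose k 2 + k) * c k / qint q k
      = ∑ m ∈ Icc 1 n, q ^ m / qint q m *
          ∑ k ∈ Icc 1 m, qbinom q m k * (-1) ^ k * q ^ (Nat.choose k 2) * c k := by
  simp only [Finset.mul_sum]
  rw [Finset.sum_comm' (s := Icc 1 n) (t := fun m => Icc 1 m) (t' := Icc 1 n)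
      (s' := fun k => Icc k n) (by intro x y; simp only [Finset.mem_Icc]; omega)]
  apply Finset.sum_congr rfl
  intro k hk
  rw [Finset.mem_Icc] at hk
  have h1 : ∑ m ∈ Icc k n, q ^ m / qint q m * (qbinom q m k * (-1) ^ k * q ^ (Nat.choose k 2) * c k)
      = (∑ m ∈ Icc k n, q ^ m / qint q m * qbinom q m k) * ((-1) ^ k * q ^ (Nat.choose k 2) * c k) := by
    rw [Finset.sum_mul]
    exact Finset.sum_congr rfl fun m _ => by ring
  rw [h1, key_sum hq k hk.1 n hk.2 le_rfl, pow_add]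
  ring

noncomputable def nestedSum (q : ℂ) (b : ℕ → ℂ) (r n : ℕ) : ℂ :=
  ∑ f ∈ (Fintype.piFinset fun _ : Fin (r + 1) => Finset.Icc 1 n).filter (fun f => Monotone f),
    (∏ i, q ^ (f i) / qint q (f i)) * b (f 0)

lemma nested_zero (q : ℂ) (b : ℕ → ℂ) (n : ℕ) :
    nestedSum q b 0 n = ∑ m ∈ Icc 1 n, q ^ m / qint q m * b m := by
  unfold nestedSum
  apply Finset.sum_nbij' (i := fun f => f 0) (j := fun m => fun _ => m)
  · intro f hf
    rw [Finset.mem_filter, Fintype.mem_piFinset] at hf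
    exact hf.1 0
  · intro m hm
    rw [Finset.mem_filter, Fintype.mem_piFinset]
    exact ⟨fun _ => hm, monotone_const⟩
  · intro f _
    funext i
    have : i = 0 := Fin.ext (by simp)
    rw [this]
  · intro m _
    rfl
  · intro f _
    rw [Fin.prod_univ_one]

lemma nested_succ (q : ℂ) (b : ℕ → ℂ) (r n : ℕ) :
    nestedSum q b (r + 1) n = ∑ m ∈ Icc 1 n, q ^ m / qint q m * nestedSum q b r m := by
  unfold nestedSum
  simp only [Finset.mul_sum]
  rw [Finset.sum_sigma']
  refine Finset.sum_nbij'
    (i := fun (f : Fin (r + 1 + 1) → ℕ) =>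
      (⟨f (Fin.last (r + 1)), fun i => f i.castSucc⟩ : Σ _ : ℕ, (Fin (r + 1) → ℕ)))
    (j := fun (p : Σ _ : ℕ, (Fin (r + 1) → ℕ)) => (Fin.snoc p.2 p.1 : Fin (r + 1 + 1) → ℕ))
    ?_ ?_ ?_ ?_ ?_
  · intro f hf
    rw [Finset.mem_filter, Fintype.mem_piFinset] at hf
    obtain ⟨hmem, hmono⟩ := hf
    rw [Finset.mem_sigma, Finset.mem_filter, Fintype.mem_piFinset]
    refine ⟨hmem _, ?_, hmono.comp (fun _ _ h => h)⟩
    intro i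
    rw [Finset.mem_Icc]
    exact ⟨(Finset.mem_Icc.mp (hmem i.castSucc)).1, hmono (Fin.le_last i.castSucc)⟩
  · rintro ⟨m, g⟩ hp
    rw [Finset.mem_sigma] at hp
    obtain ⟨hm, hg⟩ := hp
    rw [Finset.mem_filter, Fintype.mem_piFinset] at hg ⊢
    obtain ⟨hgmem, hgmono⟩ := hg
    rw [Finset.mem_Icc] at hm
    dsimp only at hgmem hgmono hm ⊢
    constructor
    · intro i
      refine Fin.lastCases ?_ ?_ i
      · rw [Fin.snoc_last]; exact Finset.mem_Icc.mpr ⟨hm.1, hm.2⟩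
      · intro j
        rw [Fin.snoc_castSucc]
        have := Finset.mem_Icc.mp (hgmem j)
        exact Finset.mem_Icc.mpr ⟨this.1, this.2.trans hm.2⟩
    · rw [Fin.monotone_iff_le_succ]
      intro i
      refine Fin.lastCases ?_ ?_ i
      · rw [Fin.succ_last, Fin.snoc_castSucc, Fin.snoc_last]
        exact (Finset.mem_Icc.mp (hgmem (Fin.last r))).2
      · intro j
        rw [Fin.succ_castSucc, Fin.snoc_castSucc, Fin.snoc_castSucc]
        exact hgmono (Fin.castSucc_le_succ j)
  · intro f _
    exact Fin.snoc_init_self f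
  · rintro ⟨m, g⟩ _
    dsimp only
    simp [Fin.snoc_last, Fin.snoc_castSucc]
  · intro f hf
    rw [Finset.mem_filter, Fintype.mem_piFinset] at hf
    dsimp only
    rw [Fin.prod_univ_castSucc]
    have h0 : (0 : Fin (r + 1 + 1)) = Fin.castSucc 0 := rfl
    rw [← h0]
    ring

lemma main_aux {q : ℂ} {a b : ℕ → ℂ}
    (hb : ∀ m : ℕ, b m = ∑ k ∈ Finset.Icc 1 m,
      qbinom q m k * (-1) ^ k * q ^ (Nat.choose k 2) * a k) :
    ∀ r n, 1 ≤ n → (∀ i, 1 ≤ i → i ≤ n → q ^ i ≠ 1) →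
    ∑ k ∈ Finset.Icc 1 n,
        qbinom q n k * (-1) ^ k * q ^ (Nat.choose k 2 + (r + 1) * k) * a k / (qint q k) ^ (r + 1)
      = nestedSum q b r n := by
  intro r
  induction r with
  | zero =>
    intro n hn hq
    have h1 : ∑ k ∈ Finset.Icc 1 n,
        qbinom q n k * (-1) ^ k * q ^ (Nat.choose k 2 + (0 + 1) * k) * a k / (qint q k) ^ (0 + 1)
        = ∑ k ∈ Finset.Icc 1 n,
        qbinom q n k * (-1) ^ k * q ^ (Nat.choose k 2 + k) * a k / qint q k := by
      apply Finset.sum_congr rfl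
      intro k _
      rw [show (0 + 1) * k = k from by ring, pow_one]
    rw [h1, L_step hq a, nested_zero]
    apply Finset.sum_congr rfl
    intro m _
    rw [hb m]
  | succ r ih =>
    intro n hn hq
    set c : ℕ → ℂ := fun k => q ^ ((r + 1) * k) * a k / qint q k ^ (r + 1) with hc
    have h1 : ∑ k ∈ Finset.Icc 1 n,
        qbinom q n k * (-1) ^ k * q ^ (Nat.choose k 2 + (r + 1 + 1) * k) * a k / (qint q k) ^ (r + 1 + 1)
        = ∑ k ∈ Finset.Icc 1 n,
        qbinom q n k * (-1) ^ k * q ^ (Nat.choose k 2 + k) * c k / qint q k := by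
      apply Finset.sum_congr rfl
      intro k _
      rw [hc]
      have he : Nat.choose k 2 + (r + 1 + 1) * k = (Nat.choose k 2 + k) + (r + 1) * k := by ring
      rw [he, pow_add, pow_succ]
      ring
    rw [h1, L_step hq c, nested_succ]
    apply Finset.sum_congr rfl
    intro m hm
    rw [Finset.mem_Icc] at hm
    have hq' : ∀ i, 1 ≤ i → i ≤ m → q ^ i ≠ 1 := fun i hi1 hi2 => hq i hi1 (hi2.trans hm.2)
    rw [← ih m hm.1 hq']
    congr 1
    apply Finset.sum_congr rfl
    intro k _
    rw [hc, pow_add]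
    ring

end QBinomAux

theorem stmt_3 (q : ℂ) (a b : ℕ → ℂ)
    (hb : ∀ m : ℕ, b m = ∑ k ∈ Finset.Icc 1 m,
      qbinom q m k * (-1) ^ k * q ^ (Nat.choose k 2) * a k)
    (n r : ℕ) (hn : 1 ≤ n) (hr : 1 ≤ r)
    (hq : ∀ i, 1 ≤ i → i ≤ n → q ^ i ≠ 1) :
    ∑ k ∈ Finset.Icc 1 n,
        qbinom q n k * (-1) ^ k * q ^ (Nat.choose k 2 + r * k) * a k / (qint q k) ^ r
      = ∑ f ∈ (Fintype.piFinset fun _ : Fin r => Finset.Icc 1 n).filter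
          (fun f => Monotone f),
          (∏ i : Fin r, q ^ (f i) / qint q (f i)) * b (f ⟨0, by omega⟩) := by
  obtain ⟨r', rfl⟩ : ∃ r', r = r' + 1 := ⟨r - 1, by omega⟩
  refine (QBinomAux.main_aux hb r' n hn hq).trans ?_
  unfold QBinomAux.nestedSum
  rfl
end

section
/- Let s_1,…,s_l be positive integers, w = s_1+⋯+s_l, and I = {s_1, s_1+s_2, …, s_1+⋯+s_{l-1}}. Then for any positive integer n, ∑_{k=1}^n [n choose k]_q (-1)^k q^{binom(k,2)+k} ∑_{1≤k_1<k_2<⋯<k_l=k} ∏_{i=1}^l q^{(s_i-1)k_i}/[k_i]_q^{s_i} = (-1)^l ∑ ∏_{i=1}^w q^{j_i}/[j_i]_q, where the last sum is over tuples 1≤j_1≤j_2≤⋯≤j_w≤n subject to the strict inequalities j_i < j_{i+1} for each i ∈ I. -/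
open scoped Classical

namespace Stmt7

open Finset

noncomputable def qb (q : ℂ) (n k : ℕ) : ℂ := ∏ i ∈ Finset.range k, (1 - q ^ (n - i))

variable {q : ℂ} {N : ℕ}

def QH (q : ℂ) (N : ℕ) : Prop := ∀ i, 1 ≤ i → i ≤ N → q ^ i ≠ 1

lemma one_sub_ne (hq : QH q N) (i : ℕ) (h1 : 1 ≤ i) (h2 : i ≤ N) : (1 : ℂ) - q ^ i ≠ 0 :=
  sub_ne_zero.mpr fun h => hq i h1 h2 h.symm

lemma qb_ne_zero (hq : QH q N) {n k : ℕ} (hk : k ≤ n) (hn : n ≤ N) : qb q n k ≠ 0 := by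
  refine Finset.prod_ne_zero_iff.mpr fun i hi => ?_
  rw [Finset.mem_range] at hi
  exact one_sub_ne hq _ (by omega) (by omega)

lemma qint_ne_zero (hq : QH q N) {k : ℕ} (h1 : 1 ≤ k) (h2 : k ≤ N) : qint q k ≠ 0 := by
  have h1' : (1:ℂ) - q ≠ 0 := by
    have := one_sub_ne hq 1 le_rfl (le_trans h1 h2)
    simpa using this
  exact div_ne_zero (one_sub_ne hq _ h1 h2) h1'

lemma qbinom_eq (hq : QH q N) {n k : ℕ} (hk : k ≤ n) (hn : n ≤ N) :
    qbinom q n k = qb q n k / qb q k k := by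
  rw [qbinom, Finset.prod_div_distrib]
  congr 1
  · rw [qb, ← Finset.prod_range_reflect (fun i => 1 - q ^ (n - i)) k]
    refine Finset.prod_congr rfl fun i hi => ?_
    rw [Finset.mem_range] at hi
    congr 2
    omega
  · rw [qb, ← Finset.prod_range_reflect (fun i => 1 - q ^ (k - i)) k]
    refine Finset.prod_congr rfl fun i hi => ?_
    rw [Finset.mem_range] at hi
    congr 2
    omega

lemma qbinom_zero (n : ℕ) : qbinom q n 0 = 1 := by simp [qbinom]

lemma qbinom_self (hq : QH q N) {n : ℕ} (hn : n ≤ N) : qbinom q n n = 1 := by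
  rw [qbinom]
  refine Finset.prod_eq_one fun i hi => ?_
  rw [Finset.mem_range] at hi
  rw [show n - n + 1 + i = 1 + i by omega]
  exact div_self (one_sub_ne hq _ (by omega) (by omega))

lemma qb_succ_top (q : ℂ) (n k : ℕ) : qb q n (k+1) = qb q n k * (1 - q ^ (n - k)) :=
  Finset.prod_range_succ _ _

lemma qb_split_bottom (q : ℂ) (n k : ℕ) :
    qb q n (k+1) = (1 - q ^ n) * qb q (n-1) k := by
  rw [qb, Finset.prod_range_succ']
  rw [qb]
  have h : ∀ i ∈ Finset.range k, (1 - q ^ (n - (i+1))) = (1 - q ^ (n - 1 - i)) := by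
    intro i _; congr 2; omega
  rw [Finset.prod_congr rfl h, Nat.sub_zero, mul_comm]

lemma qbinom_ratio (hq : QH q N) {n k : ℕ} (h1 : 1 ≤ k) (h2 : k ≤ n) (hn : n ≤ N) :
    qbinom q (n-1) (k-1) * (1 - q ^ n) = qbinom q n k * (1 - q ^ k) := by
  rw [qbinom_eq hq (by omega) (by omega), qbinom_eq hq h2 hn]
  obtain ⟨k', rfl⟩ : ∃ k', k = k' + 1 := ⟨k - 1, by omega⟩
  rw [qb_split_bottom q n k', qb_split_bottom q (k'+1) k']
  simp only [Nat.add_sub_cancel]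
  have hA : qb q (k'+1-1) k' ≠ 0 := qb_ne_zero hq (by omega) (by omega)
  have hB : (1:ℂ) - q ^ (k'+1) ≠ 0 := one_sub_ne hq _ (by omega) (by omega)
  have hC : (1:ℂ) - q ^ n ≠ 0 := one_sub_ne hq _ (by omega) hn
  simp only [Nat.add_sub_cancel] at hA ⊢
  field_simp

lemma qbinom_pascalA (hq : QH q N) {n k : ℕ} (h1 : 1 ≤ k) (h2 : k ≤ n - 1) (hn : n ≤ N) :
    qbinom q n k = qbinom q (n-1) k + q ^ (n-k) * qbinom q (n-1) (k-1) := by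
  have hn1 : 1 ≤ n := by omega
  rw [qbinom_eq hq (by omega) hn, qbinom_eq hq (by omega) (by omega),
    qbinom_eq hq (by omega) (by omega)]
  obtain ⟨k', rfl⟩ : ∃ k', k = k' + 1 := ⟨k - 1, by omega⟩
  rw [qb_split_bottom q n k', qb_split_bottom q (k'+1) k']
  have e1 : qb q (n-1) (k'+1) = qb q (n-1) k' * (1 - q ^ (n - 1 - k')) := qb_succ_top q _ _
  rw [e1]
  simp only [Nat.add_sub_cancel]
  have hA : qb q (n-1) k' ≠ 0 := qb_ne_zero hq (by omega) (by omega)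
  have hB : qb q k' k' ≠ 0 := qb_ne_zero hq le_rfl (by omega)
  have hC : (1:ℂ) - q ^ (k'+1) ≠ 0 := one_sub_ne hq _ (by omega) (by omega)
  have e2 : n - 1 - k' = n - (k'+1) := by omega
  rw [e2]
  field_simp
  have e3 : q ^ n = q ^ (n - (k'+1)) * q ^ (k'+1) := by
    rw [← pow_add]; congr 1; omega
  ring_nf
  rw [e3]
  ring

lemma qbinom_pascalB (hq : QH q N) {n k : ℕ} (h1 : 1 ≤ k) (h2 : k ≤ n - 1) (hn : n ≤ N) :
    qbinom q n k = qbinom q (n-1) (k-1) + q ^ k * qbinom q (n-1) k := by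
  have hn1 : 1 ≤ n := by omega
  rw [qbinom_eq hq (by omega) hn, qbinom_eq hq (by omega) (by omega),
    qbinom_eq hq (by omega) (by omega)]
  obtain ⟨k', rfl⟩ : ∃ k', k = k' + 1 := ⟨k - 1, by omega⟩
  rw [qb_split_bottom q n k', qb_split_bottom q (k'+1) k']
  have e1 : qb q (n-1) (k'+1) = qb q (n-1) k' * (1 - q ^ (n - 1 - k')) := qb_succ_top q _ _
  rw [e1]
  simp only [Nat.add_sub_cancel]
  have hA : qb q (n-1) k' ≠ 0 := qb_ne_zero hq (by omega) (by omega)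
  have hB : qb q k' k' ≠ 0 := qb_ne_zero hq le_rfl (by omega)
  have hC : (1:ℂ) - q ^ (k'+1) ≠ 0 := one_sub_ne hq _ (by omega) (by omega)
  field_simp
  have e3 : q ^ n = q ^ (n - 1 - k') * q ^ (k'+1) := by
    rw [← pow_add]; congr 1; omega
  ring_nf
  rw [e3]
  ring


/-- Partial alternating sum: `∑_{k≤m} (-1)^k q^{C(k,2)} [n,k] = (-1)^m q^{C(m+1,2)} [n-1,m]`. -/
lemma partial_sum (hq : QH q N) {n m : ℕ} (hn1 : 1 ≤ n) (hn : n ≤ N) (hm : m ≤ n - 1) :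
    ∑ k ∈ Finset.range (m+1), (-1:ℂ)^k * q ^ (Nat.choose k 2) * qbinom q n k
      = (-1:ℂ)^m * q ^ (Nat.choose (m+1) 2) * qbinom q (n-1) m := by
  induction m with
  | zero => simp [qbinom_zero]
  | succ m ih =>
    rw [Finset.sum_range_succ, ih (by omega)]
    have hp : qbinom q n (m+1) = qbinom q (n-1) m + q ^ (m+1) * qbinom q (n-1) (m+1) := by
      have := qbinom_pascalB hq (k := m+1) (n := n) (by omega) (by omega) hn
      simpa using this
    rw [hp]
    have hc : Nat.choose (m+2) 2 = Nat.choose (m+1) 2 + (m+1) := by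
      rw [Nat.choose_succ_succ (m+1) 1]
      simp [Nat.choose_one_right, Nat.add_comm]
    rw [hc, pow_add]
    ring

lemma full_sum (hq : QH q N) {n : ℕ} (hn1 : 1 ≤ n) (hn : n ≤ N) :
    ∑ k ∈ Finset.range (n+1), (-1:ℂ)^k * q ^ (Nat.choose k 2) * qbinom q n k = 0 := by
  obtain ⟨n', rfl⟩ : ∃ n', n = n' + 1 := ⟨n - 1, by omega⟩
  rw [Finset.sum_range_succ, partial_sum hq hn1 hn (by omega)]
  simp only [Nat.add_sub_cancel]
  rw [qbinom_self hq hn, qbinom_self hq (by omega)]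
  ring

/-- Tail sum: `∑_{k=m+1}^{n} (-1)^k q^{C(k,2)} [n,k] = (-1)^{m+1} q^{C(m,2)+m} [n-1,m]`. -/
lemma tail_sum (hq : QH q N) {n m : ℕ} (hn1 : 1 ≤ n) (hn : n ≤ N) (hm : m ≤ n - 1) :
    ∑ k ∈ Finset.Icc (m+1) n, (-1:ℂ)^k * q ^ (Nat.choose k 2) * qbinom q n k
      = (-1:ℂ)^(m+1) * q ^ (Nat.choose m 2 + m) * qbinom q (n-1) m := by
  have hsplit : ∑ k ∈ Finset.range (n+1), (-1:ℂ)^k * q ^ (Nat.choose k 2) * qbinom q n k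
      = (∑ k ∈ Finset.range (m+1), (-1:ℂ)^k * q ^ (Nat.choose k 2) * qbinom q n k)
        + ∑ k ∈ Finset.Icc (m+1) n, (-1:ℂ)^k * q ^ (Nat.choose k 2) * qbinom q n k := by
    rw [← Finset.sum_union]
    · congr 1
      ext x
      simp only [Finset.mem_range, Finset.mem_union, Finset.mem_Icc]
      omega
    · rw [Finset.disjoint_left]
      intro a ha hb
      simp only [Finset.mem_range] at ha
      simp only [Finset.mem_Icc] at hb
      omega
  have h0 := full_sum hq hn1 hn
  rw [hsplit, partial_sum hq hn1 hn hm] at h0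
  have hc : Nat.choose (m+1) 2 = Nat.choose m 2 + m := by
    rcases m with _ | m'
    · simp
    · rw [Nat.choose_succ_succ (m'+1) 1]
      simp [Nat.choose_one_right, Nat.add_comm]
  rw [hc] at h0
  linear_combination h0


/-- `bfun q s M l` = sum over strictly increasing `l`-tuples `k_1<...<k_l ≤ M`
of `∏ q^{(s_i-1)k_i}/[k_i]^{s_i}` (blocks `s 0, ..., s (l-1)`, top index `l-1`). -/
noncomputable def bfun (q : ℂ) (s : ℕ → ℕ) : ℕ → ℕ → ℂ
  | _, 0 => 1
  | M, l+1 => ∑ k ∈ Finset.Icc 1 M,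
      q ^ ((s l - 1) * k) / (qint q k) ^ (s l) * bfun q s (k-1) l

noncomputable def gfun (q : ℂ) (s : ℕ → ℕ) : ℕ → ℕ → ℂ
  | _, 0 => 1
  | k, l+1 => q ^ ((s l - 1) * k) / (qint q k) ^ (s l) * bfun q s (k-1) l

noncomputable def Asum (q : ℂ) (s : ℕ → ℕ) (n l : ℕ) : ℂ :=
  ∑ k ∈ Finset.Icc 1 n,
    qbinom q n k * (-1)^k * q ^ (Nat.choose k 2 + k) * gfun q s k l

/-- `Wk q s n r l` : sum over the partial top block of length `r` with entries `≤ n`,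
then strict descent into `l` full blocks. -/
noncomputable def Wk (q : ℂ) (s : ℕ → ℕ) : ℕ → ℕ → ℕ → ℂ
  | _, 0, 0 => 1
  | n, 0, l+1 => Wk q s (n-1) (s l) l
  | n, r+1, l => ∑ j ∈ Finset.Icc 1 n, q ^ j / qint q j * Wk q s j r l
  termination_by n r l => (l, r)

lemma Wk_zero_zero (q : ℂ) (s : ℕ → ℕ) : Wk q s 0 0 0 = 1 := by rw [Wk]
lemma Wk_nzero_zero (q : ℂ) (s : ℕ → ℕ) (n : ℕ) : Wk q s n 0 0 = 1 := by rw [Wk]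
lemma Wk_zero_succl (q : ℂ) (s : ℕ → ℕ) (n l : ℕ) :
    Wk q s n 0 (l+1) = Wk q s (n-1) (s l) l := by rw [Wk]
lemma Wk_succ (q : ℂ) (s : ℕ → ℕ) (n r l : ℕ) :
    Wk q s n (r+1) l = ∑ j ∈ Finset.Icc 1 n, q ^ j / qint q j * Wk q s j r l := by rw [Wk]

lemma Wk_zero_n (q : ℂ) (s : ℕ → ℕ) (r l : ℕ) (hr : 1 ≤ r) : Wk q s 0 r l = 0 := by
  obtain ⟨r', rfl⟩ : ∃ r', r = r' + 1 := ⟨r - 1, by omega⟩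
  rw [Wk_succ]
  simp

lemma Wk_step (q : ℂ) (s : ℕ → ℕ) (n r l : ℕ) (hn : 1 ≤ n) (hr : 1 ≤ r) :
    Wk q s n r l = Wk q s (n-1) r l + q ^ n / qint q n * Wk q s n (r-1) l := by
  obtain ⟨r', rfl⟩ : ∃ r', r = r' + 1 := ⟨r - 1, by omega⟩
  obtain ⟨n', rfl⟩ : ∃ n', n = n' + 1 := ⟨n - 1, by omega⟩
  rw [Wk_succ, Wk_succ]
  rw [Finset.sum_Icc_succ_top (by omega)]
  simp

lemma bfun_congr (q : ℂ) {s s' : ℕ → ℕ} (M l : ℕ) (h : ∀ i < l, s i = s' i) :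
    bfun q s M l = bfun q s' M l := by
  induction l generalizing M with
  | zero => rw [bfun, bfun]
  | succ l ih =>
    rw [bfun, bfun]
    refine Finset.sum_congr rfl fun k hk => ?_
    rw [h l (by omega), ih (k-1) (fun i hi => h i (by omega))]

lemma Wk_congr {s s' : ℕ → ℕ} (q : ℂ) (n r l : ℕ) (h : ∀ i < l, s i = s' i) :
    Wk q s n r l = Wk q s' n r l := by
  induction l generalizing n r with
  | zero =>
    induction r generalizing n with
    | zero => rw [Wk_nzero_zero, Wk_nzero_zero]
    | succ r ihr =>
      rw [Wk_succ, Wk_succ]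
      exact Finset.sum_congr rfl fun j _ => by rw [ihr]
  | succ l ihl =>
    induction r generalizing n with
    | zero =>
      rw [Wk_zero_succl, Wk_zero_succl, h l (by omega)]
      exact ihl _ _ (fun i hi => h i (by omega))
    | succ r ihr =>
      rw [Wk_succ, Wk_succ]
      exact Finset.sum_congr rfl fun j _ => by rw [ihr]


lemma bfun_eq_sum_gfun (q : ℂ) (s : ℕ → ℕ) (M l : ℕ) :
    bfun q s M (l+1) = ∑ m ∈ Finset.Icc 1 M, gfun q s m (l+1) := by
  rw [bfun]
  exact Finset.sum_congr rfl fun m _ => by rw [gfun]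

lemma sum_swap_tri (B : ℕ) (f : ℕ → ℕ → ℂ) :
    ∑ k ∈ Finset.Icc 1 B, ∑ m ∈ Finset.Icc 1 (k-1), f k m
      = ∑ m ∈ Finset.Icc 1 B, ∑ k ∈ Finset.Icc (m+1) B, f k m := by
  induction B with
  | zero => simp
  | succ B ih =>
    rw [Finset.sum_Icc_succ_top (by omega : 1 ≤ B + 1), ih,
      Finset.sum_Icc_succ_top (by omega : 1 ≤ B + 1)]
    have h1 : ∑ m ∈ Finset.Icc 1 (B+1-1), f (B+1) m = ∑ m ∈ Finset.Icc 1 B, f (B+1) m := by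
      simp
    have h2 : ∑ k ∈ Finset.Icc (B+1+1) (B+1), f k (B+1) = 0 := by
      rw [Finset.Icc_eq_empty (by omega)]
      simp
    rw [h1, h2, add_zero]
    rw [← Finset.sum_add_distrib]
    refine Finset.sum_congr rfl fun m hm => ?_
    rw [Finset.mem_Icc] at hm
    rw [Finset.sum_Icc_succ_top (by omega : m + 1 ≤ B + 1)]

/-- difference of consecutive `Asum` in `n`. -/
lemma Asum_delta (hq : QH q N) (s : ℕ → ℕ) (n l : ℕ) (hn : n + 1 ≤ N) :
    Asum q s (n+1) l = Asum q s n l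
      + q ^ (n+1) / qint q (n+1) *
        ∑ k ∈ Finset.Icc 1 (n+1),
          qbinom q (n+1) k * (-1)^k * q ^ (Nat.choose k 2) * (qint q k * gfun q s k l) := by
  have h1q : (1:ℂ) - q ≠ 0 := by
    have := one_sub_ne hq 1 le_rfl (by omega)
    simpa using this
  have hn1 : (1:ℂ) - q ^ (n+1) ≠ 0 := one_sub_ne hq (n+1) (by omega) hn
  have hmain : ∀ k ∈ Finset.Icc 1 n,
      qbinom q (n+1) k * (-1)^k * q ^ (Nat.choose k 2 + k) * gfun q s k l
        = qbinom q n k * (-1)^k * q ^ (Nat.choose k 2 + k) * gfun q s k l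
          + q ^ (n+1) / qint q (n+1) *
            (qbinom q (n+1) k * (-1)^k * q ^ (Nat.choose k 2) * (qint q k * gfun q s k l)) := by
    intro k hk
    rw [Finset.mem_Icc] at hk
    have hP := qbinom_pascalA hq (n := n+1) (k := k) (by omega) (by omega) hn
    simp only [Nat.add_sub_cancel] at hP
    have hR := qbinom_ratio hq (n := n+1) (k := k) (by omega) (by omega) hn
    simp only [Nat.add_sub_cancel] at hR
    have hkk : (1:ℂ) - q ^ k ≠ 0 := one_sub_ne hq k (by omega) (by omega)
    have e1 : q ^ (n + 1 - k) * q ^ (Nat.choose k 2 + k) = q ^ (n+1) * q ^ (Nat.choose k 2) := by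
      rw [← pow_add, ← pow_add]
      congr 1
      omega
    have key : q ^ (n+1-k) * qbinom q n (k-1) * q ^ (Nat.choose k 2 + k)
        = q ^ (n+1) / qint q (n+1) * qbinom q (n+1) k * q ^ (Nat.choose k 2) * qint q k := by
      rw [show q ^ (n+1-k) * qbinom q n (k-1) * q ^ (Nat.choose k 2 + k)
          = (q ^ (n+1-k) * q ^ (Nat.choose k 2 + k)) * qbinom q n (k-1) by ring, e1]
      rw [qint, qint]
      field_simp
      linear_combination (q ^ (n+1) * q ^ (Nat.choose k 2)) * hR
    linear_combination ((-1:ℂ)^k * gfun q s k l) * key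
      + ((-1:ℂ)^k * q ^ (Nat.choose k 2 + k) * gfun q s k l) * hP
  have htop : qbinom q (n+1) (n+1) * (-1)^(n+1) * q ^ (Nat.choose (n+1) 2 + (n+1)) * gfun q s (n+1) l
      = q ^ (n+1) / qint q (n+1) *
        (qbinom q (n+1) (n+1) * (-1)^(n+1) * q ^ (Nat.choose (n+1) 2) * (qint q (n+1) * gfun q s (n+1) l)) := by
    rw [qbinom_self hq hn, qint]
    have : q ^ (Nat.choose (n+1) 2 + (n+1)) = q ^ (Nat.choose (n+1) 2) * q ^ (n+1) := by
      rw [← pow_add]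
    rw [this]
    field_simp
  rw [Asum, Asum, Finset.sum_Icc_succ_top (by omega : 1 ≤ n + 1),
    Finset.mul_sum, Finset.sum_Icc_succ_top (by omega : 1 ≤ n + 1),
    Finset.sum_congr rfl hmain, Finset.sum_add_distrib, htop]
  ring


lemma qint_mul_gfun_case2 (hq : QH q N) {k : ℕ} (hk1 : 1 ≤ k) (hk2 : k ≤ N)
    (s : ℕ → ℕ) (l : ℕ) (hsl : 2 ≤ s l) :
    qint q k * gfun q s k (l+1)
      = q ^ k * gfun q (Function.update s l (s l - 1)) k (l+1) := by
  obtain ⟨m, hm⟩ : ∃ m, s l = m + 2 := ⟨s l - 2, by omega⟩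
  rw [gfun, gfun, Function.update_self]
  have hb : bfun q (Function.update s l (s l - 1)) (k-1) l = bfun q s (k-1) l := by
    refine bfun_congr q _ _ fun i hi => ?_
    rw [Function.update_of_ne (by omega)]
  rw [hb, hm]
  have hqk : qint q k ≠ 0 := qint_ne_zero hq hk1 hk2
  rw [show m + 2 - 1 = m + 1 by omega, show m + 1 - 1 = m by omega]
  have e1 : q ^ ((m + 1) * k) = q ^ k * q ^ (m * k) := by
    rw [← pow_add]
    congr 1
    ring
  rw [e1, show (m + 2 : ℕ) = (m+1) + 1 from rfl, pow_succ]
  field_simp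

lemma qint_mul_gfun_case1 (hq : QH q N) {k : ℕ} (hk1 : 1 ≤ k) (hk2 : k ≤ N)
    (s : ℕ → ℕ) (l : ℕ) (hsl : s l = 1) :
    qint q k * gfun q s k (l+1) = bfun q s (k-1) l := by
  rw [gfun, hsl]
  have hqk : qint q k ≠ 0 := qint_ne_zero hq hk1 hk2
  simp only [Nat.sub_self, zero_mul, pow_zero, pow_one]
  field_simp

/-- The main identity for the recursive forms. -/
lemma main_identity (hq : QH q N) :
    ∀ W l s n, (∀ i < l, 1 ≤ s i) → (∑ i ∈ Finset.range l, s i = W) → n ≤ N → 1 ≤ l →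
      Asum q s n l = (-1:ℂ)^l * Wk q s (n+1) 0 l := by
  intro W
  induction W using Nat.strong_induction_on with
  | _ W ihW =>
  intro l s n hs hW hn hl
  obtain ⟨l', rfl⟩ : ∃ l', l = l' + 1 := ⟨l - 1, by omega⟩
  have H : ∀ n, n ≤ N → Asum q s n (l'+1) = (-1:ℂ)^(l'+1) * Wk q s (n+1) 0 (l'+1) := by
    intro n
    induction n with
    | zero =>
      intro _
      rw [show (0:ℕ)+1 = 1 from rfl, Wk_zero_succl]
      rw [show (1:ℕ)-1 = 0 from rfl, Wk_zero_n q s _ l' (hs l' (by omega))]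
      simp [Asum]
    | succ n ihn =>
      intro hn1
      have hδ := Asum_delta hq s n (l'+1) hn1
      have hsl' : 1 ≤ s l' := hs l' (by omega)
      have hW2 := hW
      rw [Finset.sum_range_succ] at hW2
      rcases Nat.lt_or_ge (s l') 2 with hcase | hcase
      · -- s l' = 1
        have hsl1 : s l' = 1 := by omega
        have hS : ∀ k ∈ Finset.Icc 1 (n+1),
            qbinom q (n+1) k * (-1:ℂ)^k * q ^ (Nat.choose k 2) * (qint q k * gfun q s k (l'+1))
            = qbinom q (n+1) k * (-1:ℂ)^k * q ^ (Nat.choose k 2) * bfun q s (k-1) l' := by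
          intro k hk
          rw [Finset.mem_Icc] at hk
          rw [qint_mul_gfun_case1 hq (by omega) (by omega) s l' hsl1]
        rw [Finset.sum_congr rfl hS] at hδ
        rcases Nat.eq_zero_or_pos l' with hl0 | hl0
        · -- l' = 0 : base composition (1)
          subst hl0
          have hb1 : ∀ k ∈ Finset.Icc 1 (n+1),
              qbinom q (n+1) k * (-1:ℂ)^k * q ^ (Nat.choose k 2) * bfun q s (k-1) 0
              = (-1:ℂ)^k * q ^ (Nat.choose k 2) * qbinom q (n+1) k := by
            intro k _
            rw [bfun]
            ring
          rw [Finset.sum_congr rfl hb1] at hδ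
          have ht := tail_sum hq (n := n+1) (m := 0) (by omega) hn1 (by omega)
          simp only [Nat.add_sub_cancel] at ht
          rw [ht, qbinom_zero] at hδ
          have e1 : Wk q s (n+1+1) 0 (0+1) = Wk q s n 1 0 + q ^ (n+1) / qint q (n+1) * 1 := by
            rw [Wk_zero_succl]
            simp only [Nat.add_sub_cancel]
            rw [hsl1, Wk_step q s (n+1) 1 0 (by omega) (by omega)]
            simp only [Nat.add_sub_cancel, Nat.sub_self]
            rw [Wk_nzero_zero]
          have e2 : Wk q s (n+1) 0 (0+1) = Wk q s n 1 0 := by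
            rw [Wk_zero_succl]
            simp only [Nat.add_sub_cancel]
            rw [hsl1]
          rw [hδ, ihn (by omega), e1, e2]
          norm_num
          ring
        · -- l' = l''+1
          obtain ⟨l'', rfl⟩ : ∃ l'', l' = l'' + 1 := ⟨l' - 1, by omega⟩
          have hb2 : ∀ k ∈ Finset.Icc 1 (n+1),
              qbinom q (n+1) k * (-1:ℂ)^k * q ^ (Nat.choose k 2) * bfun q s (k-1) (l''+1)
              = ∑ m ∈ Finset.Icc 1 (k-1),
                  qbinom q (n+1) k * (-1:ℂ)^k * q ^ (Nat.choose k 2) * gfun q s m (l''+1) := by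
            intro k _
            rw [bfun_eq_sum_gfun, Finset.mul_sum]
          rw [Finset.sum_congr rfl hb2] at hδ
          rw [sum_swap_tri (n+1) (fun k m => qbinom q (n+1) k * (-1:ℂ)^k * q ^ (Nat.choose k 2) * gfun q s m (l''+1))] at hδ
          have htail : ∀ m ∈ Finset.Icc 1 (n+1),
              ∑ k ∈ Finset.Icc (m+1) (n+1),
                qbinom q (n+1) k * (-1:ℂ)^k * q ^ (Nat.choose k 2) * gfun q s m (l''+1)
              = (if m ≤ n then ((-1:ℂ)^(m+1) * q ^ (Nat.choose m 2 + m) * qbinom q n m) else 0) * gfun q s m (l''+1) := by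
            intro m hm
            rw [Finset.mem_Icc] at hm
            rcases Nat.lt_or_ge n m with h | h
            · have : m = n + 1 := by omega
              subst this
              rw [if_neg (by omega), Finset.Icc_eq_empty (by omega)]
              simp
            · rw [if_pos h, ← Finset.sum_mul]
              congr 1
              have ht := tail_sum hq (n := n+1) (m := m) (by omega) hn1 (by omega)
              simp only [Nat.add_sub_cancel] at ht
              rw [← ht]
              refine Finset.sum_congr rfl fun k _ => by ring
          rw [Finset.sum_congr rfl htail] at hδ
          have hred : ∑ m ∈ Finset.Icc 1 (n+1),
              (if m ≤ n then ((-1:ℂ)^(m+1) * q ^ (Nat.choose m 2 + m) * qbinom q n m) else 0) * gfun q s m (l''+1)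
              = - Asum q s n (l''+1) := by
            rw [Finset.sum_Icc_succ_top (by omega : 1 ≤ n+1), if_neg (by omega), zero_mul, add_zero]
            rw [Asum, ← Finset.sum_neg_distrib]
            refine Finset.sum_congr rfl fun m hm => ?_
            rw [Finset.mem_Icc] at hm
            rw [if_pos (by omega)]
            ring
          rw [hred] at hδ
          have hW' : ∑ i ∈ Finset.range (l''+1), s i = W - 1 := by omega
          have hA2 := ihW (W-1) (by omega) (l''+1) s n (fun i hi => hs i (by omega)) hW' (by omega) (by omega)
          have e1 : Wk q s (n+1+1) 0 (l''+1+1)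
              = Wk q s n 1 (l''+1) + q ^ (n+1) / qint q (n+1) * Wk q s (n+1) 0 (l''+1) := by
            rw [Wk_zero_succl]
            simp only [Nat.add_sub_cancel]
            rw [hsl1, Wk_step q s (n+1) 1 (l''+1) (by omega) (by omega)]
            simp only [Nat.add_sub_cancel, Nat.sub_self]
          have e2 : Wk q s (n+1) 0 (l''+1+1) = Wk q s n 1 (l''+1) := by
            rw [Wk_zero_succl]
            simp only [Nat.add_sub_cancel]
            rw [hsl1]
          rw [hδ, ihn (by omega), hA2, e1, e2]
          ring
      · -- 2 ≤ s l'
        set s' := Function.update s l' (s l' - 1) with hs'def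
        have hS : ∀ k ∈ Finset.Icc 1 (n+1),
            qbinom q (n+1) k * (-1:ℂ)^k * q ^ (Nat.choose k 2) * (qint q k * gfun q s k (l'+1))
            = qbinom q (n+1) k * (-1:ℂ)^k * q ^ (Nat.choose k 2 + k) * gfun q s' k (l'+1) := by
          intro k hk
          rw [Finset.mem_Icc] at hk
          rw [qint_mul_gfun_case2 hq (by omega) (by omega) s l' hcase, pow_add]
          ring
        rw [Finset.sum_congr rfl hS] at hδ
        have hs'pos : ∀ i < l'+1, 1 ≤ s' i := by
          intro i hi
          rcases eq_or_ne i l' with rfl | hne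
          · rw [hs'def, Function.update_self]; omega
          · rw [hs'def, Function.update_of_ne hne]; exact hs i hi
        have hW' : ∑ i ∈ Finset.range (l'+1), s' i = W - 1 := by
          rw [Finset.sum_range_succ, hs'def, Function.update_self]
          have h2 : ∑ i ∈ Finset.range l', Function.update s l' (s l' - 1) i
              = ∑ i ∈ Finset.range l', s i := by
            refine Finset.sum_congr rfl fun i hi => ?_
            rw [Finset.mem_range] at hi
            rw [Function.update_of_ne (by omega)]
          rw [h2]
          omega
        have hA2 := ihW (W-1) (by omega) (l'+1) s' (n+1) hs'pos hW' hn1 (by omega)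
        have hsum : (∑ k ∈ Finset.Icc 1 (n+1),
            qbinom q (n+1) k * (-1:ℂ)^k * q ^ (Nat.choose k 2 + k) * gfun q s' k (l'+1))
            = Asum q s' (n+1) (l'+1) := rfl
        rw [hsum, hA2] at hδ
        have e3 : Wk q s' (n+1+1) 0 (l'+1) = Wk q s (n+1) (s l' - 1) l' := by
          rw [Wk_zero_succl]
          simp only [Nat.add_sub_cancel]
          rw [hs'def, Function.update_self]
          refine Wk_congr q (n+1) (s l' - 1) l' fun i hi => ?_
          rw [Function.update_of_ne (by omega)]
        have e1 : Wk q s (n+1+1) 0 (l'+1)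
            = Wk q s n (s l') l' + q ^ (n+1) / qint q (n+1) * Wk q s (n+1) (s l' - 1) l' := by
          rw [Wk_zero_succl]
          simp only [Nat.add_sub_cancel]
          rw [Wk_step q s (n+1) (s l') l' (by omega) (by omega)]
          simp only [Nat.add_sub_cancel]
        have e2 : Wk q s (n+1) 0 (l'+1) = Wk q s n (s l') l' := by
          rw [Wk_zero_succl]
          simp only [Nat.add_sub_cancel]
        rw [hδ, ihn (by omega), e2, e1, e3]
        ring
  exact H n hn


lemma snoc_mk_lt {L : ℕ} (g : Fin L → ℕ) (x : ℕ) {m : ℕ} (h : m < L) (h' : m < L + 1) :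
    (Fin.snoc g x : Fin (L+1) → ℕ) ⟨m, h'⟩ = g ⟨m, h⟩ := by
  rw [show (⟨m, h'⟩ : Fin (L+1)) = Fin.castSucc ⟨m, h⟩ from rfl, Fin.snoc_castSucc]

lemma snoc_mk_last {L : ℕ} (g : Fin L → ℕ) (x : ℕ) (h : L < L + 1) :
    (Fin.snoc g x : Fin (L+1) → ℕ) ⟨L, h⟩ = x := by
  rw [show (⟨L, h⟩ : Fin (L+1)) = Fin.last L from rfl, Fin.snoc_last]

/-- Peeling the top coordinate of a sum over a `piFinset` of `Fin (L+1)`-tuples. -/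
lemma sum_piFinset_snoc {L : ℕ} (S : Finset ℕ) (G : (Fin (L+1) → ℕ) → ℂ) :
    ∑ f ∈ Fintype.piFinset (fun _ : Fin (L+1) => S), G f
      = ∑ x ∈ S, ∑ g ∈ Fintype.piFinset (fun _ : Fin L => S), G (Fin.snoc g x) := by
  rw [← Finset.sum_product']
  refine Finset.sum_nbij' (fun f => (f (Fin.last L), Fin.init f))
    (fun p => Fin.snoc p.2 p.1) ?_ ?_ ?_ ?_ ?_
  · intro f hf
    rw [Fintype.mem_piFinset] at hf
    rw [Finset.mem_product]
    exact ⟨hf _, by rw [Fintype.mem_piFinset]; intro i; exact hf _⟩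
  · intro p hp
    rw [Finset.mem_product] at hp
    obtain ⟨h1, h2⟩ := hp
    rw [Fintype.mem_piFinset] at h2 ⊢
    intro i
    show (Fin.snoc p.2 p.1 : Fin (L+1) → ℕ) i ∈ S
    rcases Nat.lt_or_ge i.val L with h | h
    · rw [show i = Fin.castSucc ⟨i.val, h⟩ from Fin.ext rfl, Fin.snoc_castSucc]
      exact h2 _
    · rw [show i = Fin.last L from Fin.ext (by simp only [Fin.val_last]; omega), Fin.snoc_last]
      exact h1
  · intro f _
    exact Fin.snoc_init_self f
  · intro p _
    simp [Fin.init_snoc, Fin.snoc_last]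
  · intro f _
    show G f = G (Fin.snoc (Fin.init f) (f (Fin.last L)))
    rw [Fin.snoc_init_self]

/-- filtered version -/
lemma sum_piFinset_filter_snoc {L : ℕ} (S : Finset ℕ) (P : (Fin (L+1) → ℕ) → Prop) [DecidablePred P]
    (G : (Fin (L+1) → ℕ) → ℂ) :
    ∑ f ∈ (Fintype.piFinset (fun _ : Fin (L+1) => S)).filter P, G f
      = ∑ x ∈ S, ∑ g ∈ Fintype.piFinset (fun _ : Fin L => S),
          if P (Fin.snoc g x) then G (Fin.snoc g x) else 0 := by
  rw [Finset.sum_filter, sum_piFinset_snoc]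

lemma strictMono_snoc_iff {L : ℕ} (g : Fin L → ℕ) (x : ℕ) :
    StrictMono (Fin.snoc g x : Fin (L+1) → ℕ) ↔ StrictMono g ∧ ∀ i, g i < x := by
  constructor
  · intro h
    constructor
    · intro a b hab
      have := h (a := Fin.castSucc a) (b := Fin.castSucc b) (Fin.castSucc_lt_castSucc_iff.mpr hab)
      simpa [Fin.snoc_castSucc] using this
    · intro i
      have := h (a := Fin.castSucc i) (b := Fin.last L) (Fin.castSucc_lt_last i)
      simpa [Fin.snoc_castSucc, Fin.snoc_last] using this
  · rintro ⟨h1, h2⟩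
    intro a b hab
    rcases Nat.lt_or_ge b.val L with hb | hb
    · have ha : a.val < L := by omega
      rw [show a = Fin.castSucc ⟨a.val, ha⟩ from Fin.ext rfl,
        show b = Fin.castSucc ⟨b.val, hb⟩ from Fin.ext rfl, Fin.snoc_castSucc, Fin.snoc_castSucc]
      exact h1 (Fin.mk_lt_mk.mpr (Fin.lt_def.mp hab))
    · have hbl : b = Fin.last L := Fin.ext (by simp only [Fin.val_last]; omega)
      have ha : a.val < L := by
        rw [hbl] at hab
        have h5 := Fin.lt_def.mp hab
        simpa using h5
      rw [hbl, show a = Fin.castSucc ⟨a.val, ha⟩ from Fin.ext rfl, Fin.snoc_castSucc, Fin.snoc_last]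
      exact h2 _

/-- `bfun` equals the sum over strictly increasing tuples bounded by `M`. -/
lemma bfun_eq_sum (hq : QH q N) (s : ℕ → ℕ) :
    ∀ l M, M ≤ N →
      bfun q s M l = ∑ f ∈ (Fintype.piFinset (fun _ : Fin l => Finset.Icc 1 N)).filter
        (fun f => StrictMono f ∧ ∀ i, f i ≤ M),
          ∏ i : Fin l, q ^ ((s i.val - 1) * f i) / (qint q (f i)) ^ (s i.val) := by
  intro l
  induction l with
  | zero =>
    intro M _
    rw [bfun]
    rw [show (Fintype.piFinset (fun _ : Fin 0 => Finset.Icc 1 N)) = {![]} by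
      simp; apply Subsingleton.elim]
    rw [show ({![]} : Finset (Fin 0 → ℕ)).filter (fun f => StrictMono f ∧ ∀ i, f i ≤ M) = {![]} by
      rw [Finset.filter_eq_self]
      intro f _
      exact ⟨fun a => a.elim0, fun i => i.elim0⟩]
    simp
  | succ L ih =>
    intro M hM
    rw [bfun, sum_piFinset_filter_snoc]
    have hstep : ∀ x ∈ Finset.Icc 1 N,
        (∑ g ∈ Fintype.piFinset (fun _ : Fin L => Finset.Icc 1 N),
          if (StrictMono (Fin.snoc g x : Fin (L+1) → ℕ) ∧ ∀ i, (Fin.snoc g x : Fin (L+1) → ℕ) i ≤ M)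
          then ∏ i : Fin (L+1), q ^ ((s i.val - 1) * (Fin.snoc g x : Fin (L+1) → ℕ) i) / (qint q ((Fin.snoc g x : Fin (L+1) → ℕ) i)) ^ (s i.val)
          else 0)
        = if x ≤ M then
            q ^ ((s L - 1) * x) / (qint q x) ^ (s L) * bfun q s (x-1) L
          else 0 := by
      intro x hx
      rw [Finset.mem_Icc] at hx
      by_cases hxM : x ≤ M
      · rw [if_pos hxM, ih (x-1) (by omega), Finset.sum_filter, Finset.mul_sum]
        refine Finset.sum_congr rfl fun g hg => ?_
        rw [Fintype.mem_piFinset] at hg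
        have hcond : (StrictMono (Fin.snoc g x : Fin (L+1) → ℕ) ∧ ∀ i, (Fin.snoc g x : Fin (L+1) → ℕ) i ≤ M)
            ↔ (StrictMono g ∧ ∀ i, g i ≤ x - 1) := by
          rw [strictMono_snoc_iff]
          constructor
          · rintro ⟨⟨h1, h2⟩, h3⟩
            exact ⟨h1, fun i => by have := h2 i; omega⟩
          · rintro ⟨h1, h2⟩
            refine ⟨⟨h1, fun i => by have := h2 i; omega⟩, fun i => ?_⟩
            rcases Nat.lt_or_ge i.val L with h | h
            · rw [snoc_mk_lt g x h i.isLt]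
              have := h2 ⟨i.val, h⟩
              omega
            · rw [show i = Fin.last L from Fin.ext (by simp only [Fin.val_last]; omega), Fin.snoc_last]
              exact hxM
        have hprod : (∏ i : Fin (L+1), q ^ ((s i.val - 1) * (Fin.snoc g x : Fin (L+1) → ℕ) i) / (qint q ((Fin.snoc g x : Fin (L+1) → ℕ) i)) ^ (s i.val))
            = q ^ ((s L - 1) * x) / (qint q x) ^ (s L) *
              ∏ i : Fin L, q ^ ((s i.val - 1) * g i) / (qint q (g i)) ^ (s i.val) := by
          rw [Fin.prod_univ_castSucc]
          rw [mul_comm]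
          congr 1
          · simp [Fin.snoc_last]
          · refine Finset.prod_congr rfl fun i _ => ?_
            simp [Fin.snoc_castSucc]
        rw [hprod]
        by_cases hc : StrictMono g ∧ ∀ i, g i ≤ x - 1
        · rw [if_pos (hcond.mpr hc), if_pos hc]
        · rw [if_neg (fun h => hc (hcond.mp h)), if_neg hc, mul_zero]
      · rw [if_neg hxM]
        refine Finset.sum_eq_zero fun g _ => ?_
        rw [if_neg]
        rintro ⟨-, h3⟩
        have := h3 (Fin.last L)
        rw [Fin.snoc_last] at this
        omega
    rw [Finset.sum_congr rfl hstep, ← Finset.sum_filter]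
    congr 1
    ext x
    simp only [Finset.mem_filter, Finset.mem_Icc]
    omega


lemma sum_Icc_ite {n : ℕ} (hn : n ≤ N) (h : ℕ → ℂ) :
    ∑ x ∈ Finset.Icc 1 N, (if x ≤ n then h x else 0) = ∑ x ∈ Finset.Icc 1 n, h x := by
  rw [← Finset.sum_filter]
  congr 1
  ext x
  simp only [Finset.mem_filter, Finset.mem_Icc]
  omega

lemma gfun_eq_sum (hq : QH q N) (s : ℕ → ℕ) (l k : ℕ) (hk1 : 1 ≤ k) (hk2 : k ≤ N) :
    (∑ f ∈ (Fintype.piFinset fun _ : Fin (l+1) => Finset.Icc 1 N).filter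
        (fun f => StrictMono f ∧ f (Fin.last l) = k),
        ∏ i : Fin (l+1), q ^ ((s i.val - 1) * f i) / (qint q (f i)) ^ (s i.val))
      = gfun q s k (l+1) := by
  rw [sum_piFinset_filter_snoc]
  have hstep : ∀ x ∈ Finset.Icc 1 N,
      (∑ g ∈ Fintype.piFinset (fun _ : Fin l => Finset.Icc 1 N),
        if (StrictMono (Fin.snoc g x : Fin (l+1) → ℕ) ∧ (Fin.snoc g x : Fin (l+1) → ℕ) (Fin.last l) = k)
        then ∏ i : Fin (l+1), q ^ ((s i.val - 1) * (Fin.snoc g x : Fin (l+1) → ℕ) i) / (qint q ((Fin.snoc g x : Fin (l+1) → ℕ) i)) ^ (s i.val)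
        else 0)
      = if x = k then q ^ ((s l - 1) * k) / (qint q k) ^ (s l) * bfun q s (k-1) l else 0 := by
    intro x hx
    rw [Finset.mem_Icc] at hx
    by_cases hxk : x = k
    · subst hxk
      rw [if_pos rfl, bfun_eq_sum hq s l (x-1) (by omega), Finset.sum_filter, Finset.mul_sum]
      refine Finset.sum_congr rfl fun g hg => ?_
      have hcond : (StrictMono (Fin.snoc g x : Fin (l+1) → ℕ) ∧ (Fin.snoc g x : Fin (l+1) → ℕ) (Fin.last l) = x)
          ↔ (StrictMono g ∧ ∀ i, g i ≤ x - 1) := by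
        rw [strictMono_snoc_iff, Fin.snoc_last]
        constructor
        · rintro ⟨⟨h1, h2⟩, -⟩
          exact ⟨h1, fun i => by have := h2 i; omega⟩
        · rintro ⟨h1, h2⟩
          exact ⟨⟨h1, fun i => by have := h2 i; omega⟩, rfl⟩
      have hprod : (∏ i : Fin (l+1), q ^ ((s i.val - 1) * (Fin.snoc g x : Fin (l+1) → ℕ) i) / (qint q ((Fin.snoc g x : Fin (l+1) → ℕ) i)) ^ (s i.val))
          = q ^ ((s l - 1) * x) / (qint q x) ^ (s l) *
            ∏ i : Fin l, q ^ ((s i.val - 1) * g i) / (qint q (g i)) ^ (s i.val) := by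
        rw [Fin.prod_univ_castSucc, mul_comm]
        congr 1
        · simp [Fin.snoc_last]
        · refine Finset.prod_congr rfl fun i _ => ?_
          simp [Fin.snoc_castSucc]
      rw [hprod]
      by_cases hc : StrictMono g ∧ ∀ i, g i ≤ x - 1
      · rw [if_pos (hcond.mpr hc), if_pos hc]
      · rw [if_neg (fun h => hc (hcond.mp h)), if_neg hc, mul_zero]
    · rw [if_neg hxk]
      refine Finset.sum_eq_zero fun g _ => ?_
      rw [if_neg]
      rintro ⟨-, h2⟩
      rw [Fin.snoc_last] at h2
      exact hxk h2
  rw [Finset.sum_congr rfl hstep, Finset.sum_ite_eq' (Finset.Icc 1 N) k,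
    if_pos (Finset.mem_Icc.mpr ⟨hk1, hk2⟩), gfun]


lemma cond_snoc_split {L : ℕ} (g : Fin L → ℕ) (x : ℕ) (P : ℕ → Prop) :
    (∀ m (hm : m+1 < L+1),
        (Fin.snoc g x : Fin (L+1) → ℕ) ⟨m, Nat.lt_of_succ_lt hm⟩ ≤ (Fin.snoc g x : Fin (L+1) → ℕ) ⟨m+1, hm⟩
          ∧ (P (m+1) → (Fin.snoc g x : Fin (L+1) → ℕ) ⟨m, Nat.lt_of_succ_lt hm⟩ < (Fin.snoc g x : Fin (L+1) → ℕ) ⟨m+1, hm⟩))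
    ↔ ((∀ m (hm : m+1 < L),
          g ⟨m, Nat.lt_of_succ_lt hm⟩ ≤ g ⟨m+1, hm⟩ ∧ (P (m+1) → g ⟨m, Nat.lt_of_succ_lt hm⟩ < g ⟨m+1, hm⟩))
       ∧ ∀ (h : 0 < L), (g ⟨L-1, by omega⟩ ≤ x ∧ (P L → g ⟨L-1, by omega⟩ < x))) := by
  constructor
  · intro h
    constructor
    · intro m hm
      have := h m (by omega)
      rwa [snoc_mk_lt g x (by omega : m < L), snoc_mk_lt g x hm] at this
    · intro hL
      have := h (L-1) (by omega)
      rw [snoc_mk_lt g x (by omega : L - 1 < L),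
        show (⟨L-1+1, by omega⟩ : Fin (L+1)) = Fin.last L from Fin.ext (by simp only [Fin.val_last]; omega),
        Fin.snoc_last] at this
      exact ⟨this.1, fun hp => this.2 (by rw [show L - 1 + 1 = L by omega]; exact hp)⟩
  · rintro ⟨h1, h2⟩
    intro m hm
    rcases Nat.lt_or_ge (m+1) L with h | h
    · rw [snoc_mk_lt g x (by omega : m < L), snoc_mk_lt g x h]
      exact h1 m h
    · have hmL : m + 1 = L := by omega
      rw [snoc_mk_lt g x (by omega : m < L),
        show (⟨m+1, hm⟩ : Fin (L+1)) = Fin.last L from Fin.ext (by simp only [Fin.val_last]; omega),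
        Fin.snoc_last]
      have := h2 (by omega)
      rw [show (⟨L-1, by omega⟩ : Fin L) = ⟨m, by omega⟩ from Fin.ext (by simp only; omega)] at this
      exact ⟨this.1, fun hp => this.2 (by rw [← hmL]; exact hp)⟩


lemma ite_and_pull {β : Type*} (S : Finset β) (p : Prop) (C : β → Prop) (c : ℂ) (f : β → ℂ)
    [Decidable p] [DecidablePred C] [∀ g, Decidable (p ∧ C g)] :
    ∑ g ∈ S, (if (p ∧ C g) then c * f g else 0)
      = if p then c * ∑ g ∈ S, (if C g then f g else 0) else 0 := by
  by_cases hp : p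
  · rw [if_pos hp, Finset.mul_sum]
    refine Finset.sum_congr rfl fun g _ => ?_
    by_cases hc : C g
    · rw [if_pos ⟨hp, hc⟩, if_pos hc]
    · rw [if_neg (fun h => hc h.2), if_neg hc, mul_zero]
  · rw [if_neg hp]
    refine Finset.sum_eq_zero fun g _ => ?_
    rw [if_neg (fun h => hp h.1)]

lemma Wk_eq_sum (s : ℕ → ℕ) :
    ∀ w' r l n, 1 ≤ r → (∀ i < l, 1 ≤ s i) → n ≤ N →
      w' = r + ∑ i ∈ Finset.range l, s i →
      Wk q s n r l
        = ∑ j ∈ (Fintype.piFinset fun _ : Fin w' => Finset.Icc 1 N).filter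
            (fun j => (∀ m (hm : m+1 < w'),
                j ⟨m, Nat.lt_of_succ_lt hm⟩ ≤ j ⟨m+1, hm⟩ ∧
                  ((∃ t, t < l ∧ m+1 = ∑ i ∈ Finset.range (t+1), s i) →
                    j ⟨m, Nat.lt_of_succ_lt hm⟩ < j ⟨m+1, hm⟩))
              ∧ ∀ _h : 0 < w', j ⟨w'-1, by omega⟩ ≤ n),
          ∏ i : Fin w', q ^ (j i) / qint q (j i) := by
  intro w'
  induction w' using Nat.strong_induction_on with
  | _ w' ihw =>
  intro r l n hr hs hn hw'
  obtain ⟨L, rfl⟩ : ∃ L, w' = L + 1 := ⟨w' - 1, by omega⟩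
  obtain ⟨r'', rfl⟩ : ∃ r'', r = r'' + 1 := ⟨r - 1, by omega⟩
  rw [sum_piFinset_filter_snoc, Wk_succ,
    ← sum_Icc_ite hn (fun x => q ^ x / qint q x * Wk q s x r'' l)]
  refine Finset.sum_congr rfl fun x hx => ?_
  rw [Finset.mem_Icc] at hx
  have hprod : ∀ g : Fin L → ℕ,
      (∏ i : Fin (L+1), q ^ ((Fin.snoc g x : Fin (L+1) → ℕ) i) / qint q ((Fin.snoc g x : Fin (L+1) → ℕ) i))
        = q ^ x / qint q x * ∏ i : Fin L, q ^ (g i) / qint q (g i) := by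
    intro g
    rw [Fin.prod_univ_castSucc, mul_comm]
    congr 1
    · simp [Fin.snoc_last]
    · refine Finset.prod_congr rfl fun i _ => ?_
      simp [Fin.snoc_castSucc]
  have htop : ∀ g : Fin L → ℕ,
      (∀ _h : (0:ℕ) < L+1, (Fin.snoc g x : Fin (L+1) → ℕ) ⟨L+1-1, by omega⟩ ≤ n) ↔ x ≤ n := by
    intro g
    constructor
    · intro h
      have := h (by omega)
      rwa [show (⟨L+1-1, by omega⟩ : Fin (L+1)) = Fin.last L from Fin.ext rfl, Fin.snoc_last] at this
    · intro h _
      rw [show (⟨L+1-1, by omega⟩ : Fin (L+1)) = Fin.last L from Fin.ext rfl, Fin.snoc_last]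
      exact h
  rcases Nat.eq_zero_or_pos r'' with hr0 | hr0
  · subst hr0
    -- r = 1 : L = total sum of the l blocks
    rcases Nat.eq_zero_or_pos l with hl0 | hl0
    · -- l = 0, L = 0
      subst hl0
      have hL0 : L = 0 := by simpa using hw'
      subst hL0
      rw [show (Fintype.piFinset (fun _ : Fin 0 => Finset.Icc 1 N)) = {![]} by
        simp; apply Subsingleton.elim]
      rw [Finset.sum_singleton, Wk_nzero_zero, mul_one]
      have hc : ((∀ m (hm : m+1 < 0+1),
            (Fin.snoc ![] x : Fin (0+1) → ℕ) ⟨m, Nat.lt_of_succ_lt hm⟩ ≤ (Fin.snoc ![] x : Fin (0+1) → ℕ) ⟨m+1, hm⟩ ∧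
              ((∃ t, t < 0 ∧ m+1 = ∑ i ∈ Finset.range (t+1), s i) →
                (Fin.snoc ![] x : Fin (0+1) → ℕ) ⟨m, Nat.lt_of_succ_lt hm⟩ < (Fin.snoc ![] x : Fin (0+1) → ℕ) ⟨m+1, hm⟩))
          ∧ ∀ _h : (0:ℕ) < 0+1, (Fin.snoc ![] x : Fin (0+1) → ℕ) ⟨0+1-1, by omega⟩ ≤ n)
          ↔ x ≤ n := by
        constructor
        · rintro ⟨-, h2⟩
          exact (htop ![]).mp h2
        · intro h
          exact ⟨fun m hm => absurd hm (by omega), (htop ![]).mpr h⟩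
      rw [if_congr hc (hprod ![]) rfl]
      have h1 : (∏ i : Fin 0, q ^ (![] i : ℕ) / qint q (![] i : ℕ)) = 1 := by simp
      rw [h1, mul_one]
    · -- l = l''+1, r = 1, L = full sum
      obtain ⟨l'', rfl⟩ : ∃ l'', l = l'' + 1 := ⟨l - 1, by omega⟩
      have hLsum : L = ∑ i ∈ Finset.range (l''+1), s i := by omega
      have hL1 : 1 ≤ L := by
        have h2 := hs l'' (by omega)
        rw [hLsum, Finset.sum_range_succ]
        omega
      have hIH := ihw L (by omega) (s l'') l'' (x-1) (hs l'' (by omega))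
        (fun i hi => hs i (by omega)) (by omega)
        (by rw [hLsum, Finset.sum_range_succ]; ring)
      rw [Finset.sum_filter] at hIH
      have hWx : Wk q s x 0 (l''+1) = Wk q s (x-1) (s l'') l'' := Wk_zero_succl q s x l''
      have hPL : ∃ t, t < l''+1 ∧ L = ∑ i ∈ Finset.range (t+1), s i := ⟨l'', by omega, hLsum⟩
      have hPiff : ∀ p, p < L →
          ((∃ t, t < l''+1 ∧ p = ∑ i ∈ Finset.range (t+1), s i)
            ↔ (∃ t, t < l'' ∧ p = ∑ i ∈ Finset.range (t+1), s i)) := by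
        intro p hp
        constructor
        · rintro ⟨t, ht, rfl⟩
          refine ⟨t, ?_, rfl⟩
          rcases Nat.lt_or_ge t l'' with h | h
          · exact h
          · exfalso
            have : t = l'' := by omega
            subst this
            omega
        · rintro ⟨t, ht, rfl⟩
          exact ⟨t, by omega, rfl⟩
      have hcond : ∀ g : Fin L → ℕ,
          ((∀ m (hm : m+1 < L+1),
              (Fin.snoc g x : Fin (L+1) → ℕ) ⟨m, Nat.lt_of_succ_lt hm⟩ ≤ (Fin.snoc g x : Fin (L+1) → ℕ) ⟨m+1, hm⟩ ∧
                ((∃ t, t < l''+1 ∧ m+1 = ∑ i ∈ Finset.range (t+1), s i) →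
                  (Fin.snoc g x : Fin (L+1) → ℕ) ⟨m, Nat.lt_of_succ_lt hm⟩ < (Fin.snoc g x : Fin (L+1) → ℕ) ⟨m+1, hm⟩))
            ∧ ∀ _h : (0:ℕ) < L+1, (Fin.snoc g x : Fin (L+1) → ℕ) ⟨L+1-1, by omega⟩ ≤ n)
          ↔ (x ≤ n ∧
              ((∀ m (hm : m+1 < L),
                g ⟨m, Nat.lt_of_succ_lt hm⟩ ≤ g ⟨m+1, hm⟩ ∧
                  ((∃ t, t < l'' ∧ m+1 = ∑ i ∈ Finset.range (t+1), s i) →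
                    g ⟨m, Nat.lt_of_succ_lt hm⟩ < g ⟨m+1, hm⟩))
              ∧ ∀ _h : (0:ℕ) < L, g ⟨L-1, by omega⟩ ≤ x - 1)) := by
        intro g
        rw [cond_snoc_split g x (fun p => ∃ t, t < l''+1 ∧ p = ∑ i ∈ Finset.range (t+1), s i),
          htop g]
        constructor
        · rintro ⟨⟨h1, h2⟩, h3⟩
          refine ⟨h3, fun m hm => ?_, fun _h => ?_⟩
          · obtain ⟨u, v⟩ := h1 m hm
            exact ⟨u, fun hp => v ((hPiff _ (by omega)).mpr hp)⟩
          · obtain ⟨u, v⟩ := h2 _h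
            have := v hPL
            omega
        · rintro ⟨h3, h1, h2⟩
          refine ⟨⟨fun m hm => ?_, fun _h => ?_⟩, h3⟩
          · obtain ⟨u, v⟩ := h1 m hm
            exact ⟨u, fun hp => v ((hPiff _ (by omega)).mp hp)⟩
          · have := h2 _h
            constructor
            · omega
            · intro _
              omega
      refine Eq.symm ?_
      refine Eq.trans (Finset.sum_congr rfl fun g _ => if_congr (hcond g) (hprod g) rfl) ?_
      rw [ite_and_pull, ← hIH, ← hWx]
  · -- r'' ≥ 1
    have hIH := ihw L (by omega) r'' l x hr0 hs (by omega)
      (by have := hw'; omega)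
    rw [Finset.sum_filter] at hIH
    have hnPL : ¬ (∃ t, t < l ∧ L = ∑ i ∈ Finset.range (t+1), s i) := by
      rintro ⟨t, ht, hL⟩
      have hle : ∑ i ∈ Finset.range (t+1), s i ≤ ∑ i ∈ Finset.range l, s i :=
        Finset.sum_le_sum_of_subset (Finset.range_subset_range.mpr (by omega))
      omega
    have hL1 : 1 ≤ L := by
      have := hw'
      omega
    have hcond : ∀ g : Fin L → ℕ,
        ((∀ m (hm : m+1 < L+1),
            (Fin.snoc g x : Fin (L+1) → ℕ) ⟨m, Nat.lt_of_succ_lt hm⟩ ≤ (Fin.snoc g x : Fin (L+1) → ℕ) ⟨m+1, hm⟩ ∧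
              ((∃ t, t < l ∧ m+1 = ∑ i ∈ Finset.range (t+1), s i) →
                (Fin.snoc g x : Fin (L+1) → ℕ) ⟨m, Nat.lt_of_succ_lt hm⟩ < (Fin.snoc g x : Fin (L+1) → ℕ) ⟨m+1, hm⟩))
          ∧ ∀ _h : (0:ℕ) < L+1, (Fin.snoc g x : Fin (L+1) → ℕ) ⟨L+1-1, by omega⟩ ≤ n)
        ↔ (x ≤ n ∧
            ((∀ m (hm : m+1 < L),
              g ⟨m, Nat.lt_of_succ_lt hm⟩ ≤ g ⟨m+1, hm⟩ ∧
                ((∃ t, t < l ∧ m+1 = ∑ i ∈ Finset.range (t+1), s i) →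
                  g ⟨m, Nat.lt_of_succ_lt hm⟩ < g ⟨m+1, hm⟩))
            ∧ ∀ _h : (0:ℕ) < L, g ⟨L-1, by omega⟩ ≤ x)) := by
      intro g
      rw [cond_snoc_split g x (fun p => ∃ t, t < l ∧ p = ∑ i ∈ Finset.range (t+1), s i),
        htop g]
      constructor
      · rintro ⟨⟨h1, h2⟩, h3⟩
        exact ⟨h3, h1, fun _h => (h2 _h).1⟩
      · rintro ⟨h3, h1, h2⟩
        exact ⟨⟨h1, fun _h => ⟨h2 _h, fun hp => absurd hp hnPL⟩⟩, h3⟩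
    refine Eq.symm ?_
    refine Eq.trans (Finset.sum_congr rfl fun g _ => if_congr (hcond g) (hprod g) rfl) ?_
    rw [ite_and_pull, ← hIH]


end Stmt7

theorem stmt_7 (l : ℕ) (hl : 1 ≤ l) (s : ℕ → ℕ) (hs : ∀ i < l, 1 ≤ s i)
    (w : ℕ) (hw : w = ∑ i ∈ Finset.range l, s i)
    (I : Finset ℕ)
    (hI : I = (Finset.range (l - 1)).image fun t => ∑ i ∈ Finset.range (t + 1), s i)
    (n : ℕ) (hn : 1 ≤ n) (q : ℂ)
    (hq : ∀ i, 1 ≤ i → i ≤ n → q ^ i ≠ 1) :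
    ∑ k ∈ Finset.Icc 1 n,
        qbinom q n k * (-1) ^ k * q ^ (Nat.choose k 2 + k) *
          ∑ f ∈ (Fintype.piFinset fun _ : Fin l => Finset.Icc 1 n).filter
            (fun f => StrictMono f ∧ f ⟨l - 1, by omega⟩ = k),
            ∏ i : Fin l, q ^ ((s i.val - 1) * f i) / (qint q (f i)) ^ (s i.val)
      = (-1) ^ l *
          ∑ j ∈ (Fintype.piFinset fun _ : Fin w => Finset.Icc 1 n).filter
            (fun j => ∀ (m : ℕ) (hm : m + 1 < w),
              j ⟨m, Nat.lt_of_succ_lt hm⟩ ≤ j ⟨m + 1, hm⟩ ∧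
                ((m + 1) ∈ I → j ⟨m, Nat.lt_of_succ_lt hm⟩ < j ⟨m + 1, hm⟩)),
            ∏ i : Fin w, q ^ (j i) / qint q (j i) := by
  classical
  obtain ⟨l0, rfl⟩ : ∃ l0, l = l0 + 1 := ⟨l - 1, by omega⟩
  have hqh : Stmt7.QH q n := hq
  -- Step 1: LHS = Asum
  have hLHS : (∑ k ∈ Finset.Icc 1 n,
        qbinom q n k * (-1:ℂ) ^ k * q ^ (Nat.choose k 2 + k) *
          ∑ f ∈ (Fintype.piFinset fun _ : Fin (l0+1) => Finset.Icc 1 n).filter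
            (fun f => StrictMono f ∧ f ⟨l0 + 1 - 1, by omega⟩ = k),
            ∏ i : Fin (l0+1), q ^ ((s i.val - 1) * f i) / (qint q (f i)) ^ (s i.val))
      = Stmt7.Asum q s n (l0+1) := by
    rw [Stmt7.Asum]
    refine Finset.sum_congr rfl fun k hk => ?_
    rw [Finset.mem_Icc] at hk
    congr 1
    rw [← Stmt7.gfun_eq_sum hqh s l0 k (by omega) (by omega)]
    congr 1
  rw [hLHS, Stmt7.main_identity hqh (∑ i ∈ Finset.range (l0+1), s i) (l0+1) s n hs rfl le_rfl (by omega)]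
  congr 1
  -- Step 2: Wk = RHS multiple sum
  rw [Stmt7.Wk_zero_succl]
  simp only [Nat.add_sub_cancel]
  rw [Stmt7.Wk_eq_sum s w (s l0) l0 n (hs l0 (by omega)) (fun i hi => hs i (by omega)) le_rfl
    (by rw [hw, Finset.sum_range_succ]; ring)]
  congr 1
  ext j
  simp only [Finset.mem_filter, Fintype.mem_piFinset, Finset.mem_Icc, hI, Finset.mem_image,
    Finset.mem_range, Nat.add_sub_cancel]
  constructor
  · rintro ⟨hmem, h1, h2⟩
    refine ⟨hmem, fun m hm => ?_⟩
    refine ⟨(h1 m hm).1, fun hmI => (h1 m hm).2 ?_⟩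
    obtain ⟨t, ht, heq⟩ := hmI
    exact ⟨t, ht, heq.symm⟩
  · rintro ⟨hmem, h1⟩
    refine ⟨hmem, fun m hm => ?_, fun _h => (hmem _).2⟩
    refine ⟨(h1 m hm).1, fun hmI => (h1 m hm).2 ?_⟩
    obtain ⟨t, ht, heq⟩ := hmI
    exact ⟨t, ht, heq.symm⟩
end

section
/- Let s_1,…,s_l be positive integers, w = s_1+⋯+s_l, and I = {s_1, s_1+s_2, …, s_1+⋯+s_{l-1}}. Then for any positive integer n, ∑_{k=1}^n [n choose k]_q (-1)^k q^{binom(k,2)-nk} ∑_{1≤j_1≤⋯≤j_w=k, strict at positions in I} ∏_{i=1}^w q^{j_i}/[j_i]_q = (-1)^l ∑_{1≤k_1<⋯<k_l≤n} ∏_{i=1}^l q^{(s_i-1)k_i}/[k_i]_q^{s_i}. -/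
open scoped Classical

noncomputable def qP (q : ℂ) (a k : ℕ) : ℂ := ∏ i ∈ Finset.range k, (1 - q ^ (a + 1 + i))

lemma qbinom_eq (q : ℂ) (n k : ℕ) : qbinom q n k = qP q (n - k) k / qP q 0 k := by
  simp [qbinom, qP, Finset.prod_div_distrib]

lemma qP_succ_right (q : ℂ) (a k : ℕ) : qP q a (k+1) = qP q a k * (1 - q ^ (a + 1 + k)) := by
  simp [qP, Finset.prod_range_succ]

lemma qP_succ_left (q : ℂ) (a k : ℕ) : qP q a (k+1) = (1 - q ^ (a + 1)) * qP q (a+1) k := by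
  rw [qP, Finset.prod_range_succ', mul_comm]
  have : ∀ i ∈ Finset.range k, (1 - q ^ (a + 1 + (i + 1))) = (1 - q ^ (a + 1 + 1 + i)) := by
    intro i _
    have e : a + 1 + (i + 1) = a + 1 + 1 + i := by omega
    rw [e]
  rw [Finset.prod_congr rfl this]
  rfl

lemma qP_ne_zero (q : ℂ) (a k : ℕ) (h : ∀ i, a + 1 ≤ i → i ≤ a + k → q ^ i ≠ 1) :
    qP q a k ≠ 0 := by
  unfold qP
  apply Finset.prod_ne_zero_iff.2
  intro i hi
  simp only [Finset.mem_range] at hi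
  have := h (a + 1 + i) (by omega) (by omega)
  intro hc
  exact this (by linear_combination -hc)

lemma qbinom_zero (q : ℂ) (n : ℕ) : qbinom q n 0 = 1 := by simp [qbinom]

lemma qE1 (q : ℂ) (n k : ℕ) (hk : k < n) :
    qbinom q n k * (1 - q ^ (n - k)) = (1 - q ^ n) * qbinom q (n-1) k := by
  rw [qbinom_eq, qbinom_eq]
  have h1 := qP_succ_left q (n - k - 1) k
  have e1 : n - k - 1 + 1 = n - k := by omega
  rw [e1] at h1
  have h2 := qP_succ_right q (n - k - 1) k
  have e2 : n - k - 1 + 1 + k = n := by omega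
  rw [e2] at h2
  have key : (1 - q ^ (n - k)) * qP q (n - k) k = qP q (n - k - 1) k * (1 - q ^ n) := by
    rw [← h1, h2]
  have hnk : n - 1 - k = n - k - 1 := by omega
  rw [hnk, div_mul_eq_mul_div, mul_comm (qP q (n-k) k), key]
  ring

lemma qE2 (q : ℂ) (n k : ℕ) (hk1 : 1 ≤ k) (hkn : k ≤ n) (hqk : q ^ k ≠ 1) :
    qbinom q n k * (1 - q ^ k) = (1 - q ^ n) * qbinom q (n-1) (k-1) := by
  rw [qbinom_eq, qbinom_eq]
  have h1 := qP_succ_right q (n - k) (k-1)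
  have e1 : k - 1 + 1 = k := by omega
  have e1' : n - k + 1 + (k - 1) = n := by omega
  rw [e1, e1'] at h1
  have h2 := qP_succ_right q 0 (k-1)
  have e2 : 0 + 1 + (k - 1) = k := by omega
  rw [e1, e2] at h2
  have hnk : n - 1 - (k - 1) = n - k := by omega
  have hne : (1 - q ^ k) ≠ 0 := fun hc => hqk (by linear_combination -hc)
  rw [hnk, h1, h2, div_mul_eq_mul_div, mul_div_mul_right _ _ hne, mul_comm (qP q (n-k) (k-1)),
    mul_div_assoc]

lemma qbinom_ratio (q : ℂ) (n k : ℕ) (hk1 : 1 ≤ k) (hkn : k ≤ n) (hqk : q ^ k ≠ 1) :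
    qbinom q n k * qint q k = qint q n * qbinom q (n-1) (k-1) := by
  have h := qE2 q n k hk1 hkn hqk
  unfold qint
  rw [mul_div_assoc', h, div_mul_eq_mul_div]

lemma qpascal1 (q : ℂ) (n k : ℕ) (hk1 : 1 ≤ k) (hkn : k < n)
    (hqk : q ^ k ≠ 1) (hqn : q ^ n ≠ 1) :
    qbinom q n k = qbinom q (n-1) k + q ^ (n-k) * qbinom q (n-1) (k-1) := by
  have e1 := qE1 q n k hkn
  have e2 := qE2 q n k hk1 (le_of_lt hkn) hqk
  have hne : (1 - q ^ n) ≠ 0 := fun hc => hqn (by linear_combination -hc)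
  have hp : q ^ (n - k) * q ^ k = q ^ n := by
    rw [← pow_add]
    congr 1
    omega
  apply mul_left_cancel₀ hne
  rw [mul_add, ← e1, ← mul_assoc (1 - q^n), mul_comm (1-q^n) (q^(n-k)), mul_assoc, ← e2]
  linear_combination qbinom q n k * hp

lemma qpascal2 (q : ℂ) (n k : ℕ) (hk1 : 1 ≤ k) (hkn : k < n)
    (hqk : q ^ k ≠ 1) (hqn : q ^ n ≠ 1) :
    qbinom q n k = q ^ k * qbinom q (n-1) k + qbinom q (n-1) (k-1) := by
  have e1 := qE1 q n k hkn
  have e2 := qE2 q n k hk1 (le_of_lt hkn) hqk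
  have hne : (1 - q ^ n) ≠ 0 := fun hc => hqn (by linear_combination -hc)
  have hp : q ^ k * q ^ (n - k) = q ^ n := by
    rw [← pow_add]
    congr 1
    omega
  apply mul_left_cancel₀ hne
  rw [mul_add, ← mul_assoc (1 - q^n), mul_comm (1-q^n) (q^k), mul_assoc, ← e1, ← e2]
  linear_combination qbinom q n k * hp
def en (n k : ℕ) : ℤ := (k.choose 2 : ℤ) - ((n:ℤ)-1) * k

lemma choose2_succ (m : ℕ) : ((m+1).choose 2 : ℤ) = (m.choose 2 : ℤ) + m := by
  rw [Nat.choose_succ_succ' m 1, Nat.choose_one_right]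
  push_cast
  ring

lemma qbinom_diag (q : ℂ) (n : ℕ) (hq : ∀ i, 1 ≤ i → i ≤ n → q ^ i ≠ 1) :
    qbinom q n n = 1 := by
  unfold qbinom
  rw [Finset.prod_eq_one]
  intro i hi
  simp only [Finset.mem_range] at hi
  have hnn : n - n = 0 := by omega
  rw [hnn, zero_add]
  apply div_self
  intro hc
  exact hq (1+i) (by omega) (by omega) (by linear_combination -hc)

lemma headsum (q : ℂ) (hq0 : q ≠ 0) (n : ℕ) (hn : 1 ≤ n)
    (hq : ∀ i, 1 ≤ i → i ≤ n → q ^ i ≠ 1) (m : ℕ) (hm : m ≤ n - 1) :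
    ∑ k ∈ Finset.range (m+1), (-1:ℂ)^k * qbinom q n k * q ^ en n k
      = (-1)^m * qbinom q (n-1) m * q ^ en n m := by
  induction m with
  | zero => simp [qbinom_zero, en]
  | succ m ih =>
    rw [Finset.sum_range_succ, ih (by omega)]
    have hp := qpascal1 q n (m+1) (by omega) (by omega)
      (hq (m+1) (by omega) (by omega)) (hq n (by omega) le_rfl)
    simp only [Nat.add_sub_cancel] at hp
    rw [hp]
    have hzp : (q:ℂ) ^ (n - (m+1)) * q ^ en n (m+1) = q ^ en n m := by
      rw [← zpow_natCast q (n - (m+1)), ← zpow_add₀ hq0]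
      congr 1
      simp only [en, choose2_succ]
      push_cast [Nat.cast_sub (show m+1 ≤ n by omega)]
      ring
    linear_combination (-((-1:ℂ)^m * qbinom q (n-1) m)) * hzp

lemma fullsum (q : ℂ) (hq0 : q ≠ 0) (n : ℕ) (hn : 1 ≤ n)
    (hq : ∀ i, 1 ≤ i → i ≤ n → q ^ i ≠ 1) :
    ∑ k ∈ Finset.range (n+1), (-1:ℂ)^k * qbinom q n k * q ^ en n k = 0 := by
  obtain ⟨n', rfl⟩ : ∃ n', n = n'+1 := ⟨n-1, by omega⟩
  rw [Finset.sum_range_succ]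
  have hh := headsum q hq0 (n'+1) hn hq n' (by omega)
  simp only [Nat.add_sub_cancel] at hh ⊢
  rw [hh, qbinom_diag q n' (fun i h1 h2 => hq i h1 (by omega)), qbinom_diag q (n'+1) hq]
  have he : en (n'+1) n' = en (n'+1) (n'+1) := by
    simp only [en, choose2_succ]
    push_cast
    ring
  rw [he]
  ring

lemma tailsum (q : ℂ) (hq0 : q ≠ 0) (n : ℕ) (hn : 1 ≤ n)
    (hq : ∀ i, 1 ≤ i → i ≤ n → q ^ i ≠ 1) (m : ℕ) (hm1 : 1 ≤ m) (hmn : m ≤ n) :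
    ∑ k ∈ Finset.Icc m n, (-1:ℂ)^k * qbinom q n k * q ^ en n k
      = (-1)^m * qbinom q (n-1) (m-1) * q ^ en n (m-1) := by
  obtain ⟨m', rfl⟩ : ∃ m', m = m'+1 := ⟨m-1, by omega⟩
  simp only [Nat.add_sub_cancel]
  rw [← Finset.Ico_add_one_right_eq_Icc]
  have hsplit : (∑ k ∈ Finset.Ico 0 (m'+1), (-1:ℂ)^k * qbinom q n k * q ^ en n k)
      + ∑ k ∈ Finset.Ico (m'+1) (n+1), (-1:ℂ)^k * qbinom q n k * q ^ en n k
      = ∑ k ∈ Finset.Ico 0 (n+1), (-1:ℂ)^k * qbinom q n k * q ^ en n k :=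
    Finset.sum_Ico_consecutive _ (Nat.zero_le _) (by omega)
  have hh := headsum q hq0 n hn hq m' (by omega)
  have hfull := fullsum q hq0 n hn hq
  rw [Finset.range_eq_Ico] at hh hfull
  rw [hh] at hsplit
  rw [hfull] at hsplit
  linear_combination hsplit
noncomputable def Wfun (q : ℂ) : List ℕ → ℕ → ℂ
  | [], _ => 1
  | (s :: r), k =>
    ∑ m ∈ Finset.Icc 1 k, (q^m / qint q m) *
      (if h : 2 ≤ s then Wfun q ((s-1) :: r) m else Wfun q r (m-1))
  termination_by r _ => r.sum + r.length
  decreasing_by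
  · simp only [List.sum_cons, List.length_cons]; omega
  · simp only [List.sum_cons, List.length_cons]; omega

noncomputable def Afun (q : ℂ) : List ℕ → ℕ → ℂ
  | [], _ => 0
  | (s :: r), k =>
    (q^k / qint q k) * (if 2 ≤ s then Wfun q ((s-1) :: r) k else Wfun q r (k-1))

lemma Wfun_cons (q : ℂ) (s : ℕ) (r : List ℕ) (k : ℕ) :
    Wfun q (s :: r) k = ∑ m ∈ Finset.Icc 1 k, Afun q (s :: r) m := by
  rw [Wfun]
  apply Finset.sum_congr rfl
  intro m _
  rw [Afun]
  split <;> simp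

noncomputable def Rfun (q : ℂ) : List ℕ → ℕ → ℂ
  | [], _ => 1
  | (s :: r), n => ∑ m ∈ Finset.Icc 1 n, q^((s-1)*m) / (qint q m)^s * Rfun q r (m-1)

def e0 (n k : ℕ) : ℤ := (k.choose 2 : ℤ) - (n:ℤ) * k

noncomputable def Lfun (q : ℂ) (r : List ℕ) (n : ℕ) : ℂ :=
  ∑ k ∈ Finset.Icc 1 n, (-1:ℂ)^k * qbinom q n k * q ^ e0 n k * Afun q r k
lemma swap_strict (q : ℂ) (hq0 : q ≠ 0) (n : ℕ) (hn : 1 ≤ n)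
    (hq : ∀ i, 1 ≤ i → i ≤ n → q ^ i ≠ 1) (A : ℕ → ℂ) :
    ∑ k ∈ Finset.Icc 1 n, ((-1:ℂ)^k * qbinom q n k * q ^ en n k) *
        (∑ m ∈ Finset.Icc 1 (k-1), A m)
      = ∑ m ∈ Finset.Icc 1 (n-1), A m *
          ((-1:ℂ)^(m+1) * qbinom q (n-1) m * q ^ en n m) := by
  rw [Finset.sum_congr rfl (fun k _ => Finset.mul_sum
    ((Finset.Icc 1 (k-1))) A ((-1:ℂ)^k * qbinom q n k * q ^ en n k))]
  rw [Finset.sum_comm' (s := Finset.Icc 1 n) (t := fun k => Finset.Icc 1 (k-1))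
    (t' := Finset.Icc 1 (n-1)) (s' := fun m => Finset.Icc (m+1) n)
    (by intro k m; simp only [Finset.mem_Icc]; omega)]
  apply Finset.sum_congr rfl
  intro m hm
  simp only [Finset.mem_Icc] at hm
  rw [← Finset.sum_mul, tailsum q hq0 n hn hq (m+1) (by omega) (by omega)]
  simp only [Nat.add_sub_cancel]
  ring

lemma swap_weak (q : ℂ) (hq0 : q ≠ 0) (n : ℕ) (hn : 1 ≤ n)
    (hq : ∀ i, 1 ≤ i → i ≤ n → q ^ i ≠ 1) (A : ℕ → ℂ) :
    ∑ k ∈ Finset.Icc 1 n, ((-1:ℂ)^k * qbinom q n k * q ^ en n k) *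
        (∑ m ∈ Finset.Icc 1 k, A m)
      = ∑ m ∈ Finset.Icc 1 n, A m *
          ((-1:ℂ)^m * qbinom q (n-1) (m-1) * q ^ en n (m-1)) := by
  rw [Finset.sum_congr rfl (fun k _ => Finset.mul_sum
    ((Finset.Icc 1 k)) A ((-1:ℂ)^k * qbinom q n k * q ^ en n k))]
  rw [Finset.sum_comm' (s := Finset.Icc 1 n) (t := fun k => Finset.Icc 1 k)
    (t' := Finset.Icc 1 n) (s' := fun m => Finset.Icc m n)
    (by intro k m; simp only [Finset.mem_Icc]; omega)]
  apply Finset.sum_congr rfl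
  intro m hm
  simp only [Finset.mem_Icc] at hm
  rw [← Finset.sum_mul, tailsum q hq0 n hn hq m (by omega) (by omega)]
  ring
lemma qint_ne (q : ℂ) (n : ℕ) (hq : ∀ i, 1 ≤ i → i ≤ n → q ^ i ≠ 1)
    (m : ℕ) (hm1 : 1 ≤ m) (hmn : m ≤ n) : qint q m ≠ 0 := by
  have h1 : q ^ m ≠ 1 := hq m hm1 hmn
  have h2 : q ^ 1 ≠ 1 := hq 1 le_rfl (le_trans hm1 hmn)
  unfold qint
  apply div_ne_zero
  · exact fun hc => h1 (by linear_combination -hc)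
  · exact fun hc => h2 (by rw [pow_one]; linear_combination -hc)

lemma zpow_shift (q : ℂ) (hq0 : q ≠ 0) (n m : ℕ) (hm1 : 1 ≤ m) :
    (q:ℂ)^m * q ^ en n (m-1) = q^(n:ℕ) * q ^ en n m := by
  obtain ⟨m', rfl⟩ : ∃ m', m = m'+1 := ⟨m-1, by omega⟩
  simp only [Nat.add_sub_cancel]
  rw [← zpow_natCast q (m'+1), ← zpow_natCast q n, ← zpow_add₀ hq0, ← zpow_add₀ hq0]
  congr 1
  simp only [en, choose2_succ]
  push_cast
  ring

lemma shift_term (q : ℂ) (hq0 : q ≠ 0) (n : ℕ) (hn : 1 ≤ n)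
    (hq : ∀ i, 1 ≤ i → i ≤ n → q ^ i ≠ 1) (m : ℕ) (hm1 : 1 ≤ m) (hmn : m ≤ n) :
    (q^m / qint q m) * (qbinom q (n-1) (m-1) * q ^ en n (m-1))
      = (q^(n:ℕ) / qint q n) * (qbinom q n m * q ^ en n m) := by
  have hr := qbinom_ratio q n m hm1 hmn (hq m hm1 hmn)
  have hz := zpow_shift q hq0 n m hm1
  have h1 : qint q m ≠ 0 := qint_ne q n hq m hm1 hmn
  have h2 : qint q n ≠ 0 := qint_ne q n hq n hn le_rfl
  field_simp
  linear_combination (qbinom q (n-1) (m-1) * qint q n) * hz - (q^(n:ℕ) * q ^ en n m) * hr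
lemma en_e0 (n m : ℕ) : en (n+1) m = e0 n m := by
  simp only [en, e0]; push_cast; ring

lemma e0_shift (q : ℂ) (hq0 : q ≠ 0) (n k : ℕ) :
    (q:ℂ)^k * q ^ e0 (n+1) k = q ^ e0 n k := by
  rw [← zpow_natCast q k, ← zpow_add₀ hq0]
  congr 1
  simp only [e0]; push_cast; ring

lemma e0_en (q : ℂ) (hq0 : q ≠ 0) (n k : ℕ) :
    (q:ℂ)^k * q ^ e0 (n+1) k = q ^ en (n+1) k := by
  rw [← zpow_natCast q k, ← zpow_add₀ hq0]
  congr 1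
  simp only [e0, en]; push_cast; ring

lemma main_lemma (q : ℂ) (hq0 : q ≠ 0) :
    ∀ n : ℕ, (∀ i, 1 ≤ i → i ≤ n → q ^ i ≠ 1) →
    ∀ r : List ℕ, r ≠ [] → (∀ a ∈ r, 1 ≤ a) →
    Lfun q r n = (-1:ℂ)^r.length * Rfun q r n := by
  intro n
  induction n with
  | zero =>
    intro hq r hr hpos
    obtain ⟨s, r', rfl⟩ := List.exists_cons_of_ne_nil hr
    have h10 : Finset.Icc 1 0 = (∅ : Finset ℕ) := by simp
    simp [Lfun, Rfun, h10]
  | succ n ih =>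
    intro hq
    have hq' : ∀ i, 1 ≤ i → i ≤ n → q ^ i ≠ 1 := fun i h1 h2 => hq i h1 (by omega)
    have hn1 : (1:ℕ) ≤ n+1 := by omega
    have hqn1 : qint q (n+1) ≠ 0 := qint_ne q (n+1) hq (n+1) hn1 le_rfl
    -- step A
    have stepA : ∀ r : List ℕ, (∀ a ∈ r, 1 ≤ a) →
        ∑ k ∈ Finset.Icc 1 (n+1),
            ((-1:ℂ)^k * qbinom q (n+1) k * q ^ en (n+1) k) * Wfun q r (k-1)
          = -((-1:ℂ)^r.length * Rfun q r n) := by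
      intro r hposr
      match r with
      | [] =>
        have hW : ∀ k : ℕ, Wfun q [] (k-1) = 1 := fun k => by rw [Wfun]
        have h1 : ∑ k ∈ Finset.Icc 1 (n+1),
            ((-1:ℂ)^k * qbinom q (n+1) k * q ^ en (n+1) k) * Wfun q [] (k-1)
            = ∑ k ∈ Finset.Icc 1 (n+1), (-1:ℂ)^k * qbinom q (n+1) k * q ^ en (n+1) k :=
          Finset.sum_congr rfl (fun k _ => by rw [hW k, mul_one])
        rw [h1, tailsum q hq0 (n+1) hn1 hq 1 le_rfl (by omega)]
        have hR : Rfun q [] n = 1 := by rw [Rfun]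
        have he : en (n+1) (1-1) = 0 := by simp [en]
        rw [hR, he, qbinom_zero]
        simp
      | s :: r' =>
        have h1 : ∑ k ∈ Finset.Icc 1 (n+1),
            ((-1:ℂ)^k * qbinom q (n+1) k * q ^ en (n+1) k) * Wfun q (s::r') (k-1)
            = ∑ k ∈ Finset.Icc 1 (n+1),
            ((-1:ℂ)^k * qbinom q (n+1) k * q ^ en (n+1) k) *
              ∑ m ∈ Finset.Icc 1 (k-1), Afun q (s::r') m :=
          Finset.sum_congr rfl (fun k _ => by rw [Wfun_cons])
        rw [h1, swap_strict q hq0 (n+1) hn1 hq (Afun q (s::r'))]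
        simp only [Nat.add_sub_cancel]
        have h2 : ∀ m ∈ Finset.Icc 1 n,
            Afun q (s::r') m * ((-1:ℂ)^(m+1) * qbinom q n m * q ^ en (n+1) m)
            = -((-1:ℂ)^m * qbinom q n m * q ^ e0 n m * Afun q (s::r') m) := by
          intro m _
          rw [en_e0]
          ring
        rw [Finset.sum_congr rfl h2, Finset.sum_neg_distrib]
        have h3 : (∑ m ∈ Finset.Icc 1 n,
            (-1:ℂ)^m * qbinom q n m * q ^ e0 n m * Afun q (s::r') m) = Lfun q (s::r') n := rfl
        rw [h3, ih hq' (s::r') (by simp) hposr]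
    -- step B
    have stepB : ∀ s : ℕ, ∀ r : List ℕ, 1 ≤ s → (∀ a ∈ r, 1 ≤ a) →
        ∑ k ∈ Finset.Icc 1 (n+1),
            ((-1:ℂ)^k * qbinom q (n+1) k * q ^ en (n+1) k) * Wfun q (s::r) k
          = -((q^(n+1) / qint q (n+1))^s * ((-1:ℂ)^r.length * Rfun q r n)) := by
      intro s
      induction s with
      | zero => intro r h; omega
      | succ s ihs =>
        intro r _ hposr
        have h1 : ∑ k ∈ Finset.Icc 1 (n+1),
            ((-1:ℂ)^k * qbinom q (n+1) k * q ^ en (n+1) k) * Wfun q ((s+1)::r) k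
            = ∑ k ∈ Finset.Icc 1 (n+1),
            ((-1:ℂ)^k * qbinom q (n+1) k * q ^ en (n+1) k) *
              ∑ m ∈ Finset.Icc 1 k, Afun q ((s+1)::r) m :=
          Finset.sum_congr rfl (fun k _ => by rw [Wfun_cons])
        rw [h1, swap_weak q hq0 (n+1) hn1 hq (Afun q ((s+1)::r))]
        simp only [Nat.add_sub_cancel]
        have hterm : ∀ m ∈ Finset.Icc 1 (n+1),
            Afun q ((s+1)::r) m * ((-1:ℂ)^m * qbinom q n (m-1) * q ^ en (n+1) (m-1))
            = (q^(n+1) / qint q (n+1)) *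
              (((-1:ℂ)^m * qbinom q (n+1) m * q ^ en (n+1) m) *
                (if 2 ≤ s+1 then Wfun q (s::r) m else Wfun q r (m-1))) := by
          intro m hm
          simp only [Finset.mem_Icc] at hm
          have hst := shift_term q hq0 (n+1) hn1 hq m hm.1 hm.2
          simp only [Nat.add_sub_cancel] at hst
          simp only [Afun, Nat.add_sub_cancel]
          linear_combination
            ((-1:ℂ)^m * (if 2 ≤ s+1 then Wfun q (s::r) m else Wfun q r (m-1))) * hst
        rw [Finset.sum_congr rfl hterm, ← Finset.mul_sum]
        by_cases h2 : 2 ≤ s + 1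
        · have h1s : 1 ≤ s := by omega
          have hif : ∀ m : ℕ, (if 2 ≤ s+1 then Wfun q (s::r) m else Wfun q r (m-1))
              = Wfun q (s::r) m := fun m => if_pos h2
          have h4 : (∑ k ∈ Finset.Icc 1 (n+1),
              ((-1:ℂ)^k * qbinom q (n+1) k * q ^ en (n+1) k) *
                (if 2 ≤ s+1 then Wfun q (s::r) k else Wfun q r (k-1)))
              = ∑ k ∈ Finset.Icc 1 (n+1),
              ((-1:ℂ)^k * qbinom q (n+1) k * q ^ en (n+1) k) * Wfun q (s::r) k :=
            Finset.sum_congr rfl (fun k _ => by rw [hif k])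
          rw [h4, ihs r h1s hposr]
          ring
        · have hs0 : s = 0 := by omega
          subst hs0
          have hif : ∀ m : ℕ, (if 2 ≤ 0+1 then Wfun q (0::r) m else Wfun q r (m-1))
              = Wfun q r (m-1) := fun m => if_neg h2
          have h4 : (∑ k ∈ Finset.Icc 1 (n+1),
              ((-1:ℂ)^k * qbinom q (n+1) k * q ^ en (n+1) k) *
                (if 2 ≤ 0+1 then Wfun q (0::r) k else Wfun q r (k-1)))
              = ∑ k ∈ Finset.Icc 1 (n+1),
              ((-1:ℂ)^k * qbinom q (n+1) k * q ^ en (n+1) k) * Wfun q r (k-1) :=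
            Finset.sum_congr rfl (fun k _ => by rw [hif k])
          rw [h4, stepA r hposr]
          ring
    -- main step
    intro r hr hpos
    obtain ⟨s, r', rfl⟩ := List.exists_cons_of_ne_nil hr
    have hs1 : 1 ≤ s := hpos s (List.mem_cons_self)
    have hpos' : ∀ a ∈ r', 1 ≤ a := fun a ha => hpos a (List.mem_cons_of_mem s ha)
    have hterm1 : ∀ k ∈ Finset.Icc 1 n,
        (-1:ℂ)^k * qbinom q (n+1) k * q ^ e0 (n+1) k * Afun q (s::r') k
        = (-1:ℂ)^k * qbinom q n k * q ^ e0 n k * Afun q (s::r') k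
          + (-1:ℂ)^k * qbinom q n (k-1) * q ^ e0 (n+1) k * Afun q (s::r') k := by
      intro k hk
      simp only [Finset.mem_Icc] at hk
      have hp := qpascal2 q (n+1) k hk.1 (by omega) (hq k hk.1 (by omega))
        (hq (n+1) (by omega) le_rfl)
      simp only [Nat.add_sub_cancel] at hp
      have hz := e0_shift q hq0 n k
      rw [hp]
      linear_combination ((-1:ℂ)^k * qbinom q n k * Afun q (s::r') k) * hz
    have claim1 : Lfun q (s::r') (n+1) = Lfun q (s::r') n
        + ∑ k ∈ Finset.Icc 1 (n+1),
            (-1:ℂ)^k * qbinom q n (k-1) * q ^ e0 (n+1) k * Afun q (s::r') k := by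
      have e1 : Lfun q (s::r') (n+1) = ∑ k ∈ Finset.Icc 1 (n+1),
          (-1:ℂ)^k * qbinom q (n+1) k * q ^ e0 (n+1) k * Afun q (s::r') k := rfl
      have e2 : Lfun q (s::r') n = ∑ k ∈ Finset.Icc 1 n,
          (-1:ℂ)^k * qbinom q n k * q ^ e0 n k * Afun q (s::r') k := rfl
      rw [e1, e2,
        Finset.sum_Icc_succ_top (show 1 ≤ n+1 by omega)
          (fun k => (-1:ℂ)^k * qbinom q (n+1) k * q ^ e0 (n+1) k * Afun q (s::r') k),
        Finset.sum_Icc_succ_top (show 1 ≤ n+1 by omega)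
          (fun k => (-1:ℂ)^k * qbinom q n (k-1) * q ^ e0 (n+1) k * Afun q (s::r') k),
        Finset.sum_congr rfl hterm1, Finset.sum_add_distrib]
      have htop : qbinom q (n+1) (n+1) = qbinom q n ((n+1)-1) := by
        rw [qbinom_diag q (n+1) hq, Nat.add_sub_cancel, qbinom_diag q n hq']
      rw [htop]
      ring
    have hterm2 : ∀ k ∈ Finset.Icc 1 (n+1),
        (-1:ℂ)^k * qbinom q n (k-1) * q ^ e0 (n+1) k * Afun q (s::r') k
        = (1 / qint q (n+1)) * (((-1:ℂ)^k * qbinom q (n+1) k * q ^ en (n+1) k) *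
            (if 2 ≤ s then Wfun q ((s-1)::r') k else Wfun q r' (k-1))) := by
      intro k hk
      simp only [Finset.mem_Icc] at hk
      have hz2 := e0_en q hq0 n k
      have hr2 := qbinom_ratio q (n+1) k hk.1 hk.2 (hq k hk.1 hk.2)
      simp only [Nat.add_sub_cancel] at hr2
      have hik : qint q k ≠ 0 := qint_ne q (n+1) hq k hk.1 hk.2
      simp only [Afun]
      set B := (if 2 ≤ s then Wfun q ((s-1)::r') k else Wfun q r' (k-1)) with hB
      field_simp
      linear_combination
        (B * qint q (n+1) * qbinom q n (k-1)) * hz2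
        - (B * q ^ en (n+1) k) * hr2
    have hSigma : (∑ k ∈ Finset.Icc 1 (n+1),
        ((-1:ℂ)^k * qbinom q (n+1) k * q ^ en (n+1) k) *
          (if 2 ≤ s then Wfun q ((s-1)::r') k else Wfun q r' (k-1)))
        = -((q^(n+1) / qint q (n+1))^(s-1) * ((-1:ℂ)^(r'.length) * Rfun q r' n)) := by
      by_cases h2 : 2 ≤ s
      · have h4 : (∑ k ∈ Finset.Icc 1 (n+1),
            ((-1:ℂ)^k * qbinom q (n+1) k * q ^ en (n+1) k) *
              (if 2 ≤ s then Wfun q ((s-1)::r') k else Wfun q r' (k-1)))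
            = ∑ k ∈ Finset.Icc 1 (n+1),
            ((-1:ℂ)^k * qbinom q (n+1) k * q ^ en (n+1) k) * Wfun q ((s-1)::r') k :=
          Finset.sum_congr rfl (fun k _ => by rw [if_pos h2])
        rw [h4]
        exact stepB (s-1) r' (by omega) hpos'
      · have h4 : (∑ k ∈ Finset.Icc 1 (n+1),
            ((-1:ℂ)^k * qbinom q (n+1) k * q ^ en (n+1) k) *
              (if 2 ≤ s then Wfun q ((s-1)::r') k else Wfun q r' (k-1)))
            = ∑ k ∈ Finset.Icc 1 (n+1),
            ((-1:ℂ)^k * qbinom q (n+1) k * q ^ en (n+1) k) * Wfun q r' (k-1) :=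
          Finset.sum_congr rfl (fun k _ => by rw [if_neg h2])
        have hs' : s - 1 = 0 := by omega
        rw [h4, stepA r' hpos', hs', pow_zero, one_mul]
    have hR : Rfun q (s::r') (n+1) = Rfun q (s::r') n
        + q^((s-1)*(n+1)) / (qint q (n+1))^s * Rfun q r' n := by
      have e1 : Rfun q (s::r') (n+1) = ∑ m ∈ Finset.Icc 1 (n+1),
          q^((s-1)*m) / (qint q m)^s * Rfun q r' (m-1) := by rw [Rfun]
      have e2 : Rfun q (s::r') n = ∑ m ∈ Finset.Icc 1 n,
          q^((s-1)*m) / (qint q m)^s * Rfun q r' (m-1) := by rw [Rfun]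
      rw [e1, e2, Finset.sum_Icc_succ_top (show 1 ≤ n+1 by omega)
        (fun m => q^((s-1)*m) / (qint q m)^s * Rfun q r' (m-1))]
      simp only [Nat.add_sub_cancel]
    have hpow : (1 / qint q (n+1)) * (q^(n+1)/qint q (n+1))^(s-1)
        = q^((s-1)*(n+1)) / (qint q (n+1))^s := by
      rw [div_pow, ← pow_mul, Nat.mul_comm (n+1) (s-1)]
      rw [div_mul_div_comm, one_mul]
      congr 1
      rw [← pow_succ']
      congr 1
      omega
    rw [claim1, Finset.sum_congr rfl hterm2, ← Finset.mul_sum, hSigma,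
      ih hq' (s::r') (by simp) hpos, hR]
    simp only [List.length_cons]
    linear_combination (-((-1:ℂ)^(r'.length) * Rfun q r' n)) * hpow
def chainP (I : Finset ℕ) (w : ℕ) (j : Fin w → ℕ) : Prop :=
  ∀ (m : ℕ) (hm : m + 1 < w),
    j ⟨m, Nat.lt_of_succ_lt hm⟩ ≤ j ⟨m + 1, hm⟩ ∧
      ((m + 1) ∈ I → j ⟨m, Nat.lt_of_succ_lt hm⟩ < j ⟨m + 1, hm⟩)

lemma chain_mono {I : Finset ℕ} {w : ℕ} {j : Fin w → ℕ} (h : chainP I w j) :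
    ∀ (c : ℕ) (hc : c < w) (a : ℕ) (ha : a ≤ c), j ⟨a, by omega⟩ ≤ j ⟨c, hc⟩ := by
  intro c
  induction c with
  | zero =>
    intro hc a ha
    have : a = 0 := by omega
    subst this
    exact le_rfl
  | succ c ihc =>
    intro hc a ha
    rcases Nat.eq_or_lt_of_le ha with h1 | h1
    · subst h1; exact le_rfl
    · exact le_trans (ihc (by omega) a (by omega)) (h c hc).1

lemma core_peel (I : Finset ℕ) (w N k : ℕ) (hk1 : 1 ≤ k) (hkN : k ≤ N)
    (G : Fin (w+1) → ℕ → ℂ) :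
    ∑ j ∈ (Fintype.piFinset fun _ : Fin (w+1) => Finset.Icc 1 N).filter
        (fun j => chainP I (w+1) j ∧ j (Fin.last w) = k),
      ∏ i, G i (j i)
    = G (Fin.last w) k *
        ∑ j ∈ (Fintype.piFinset fun _ : Fin w => Finset.Icc 1 (if w ∈ I then k-1 else k)).filter
          (chainP I w),
        ∏ i, G i.castSucc (j i) := by
  rw [Finset.mul_sum]
  symm
  apply Finset.sum_nbij' (fun j => (Fin.snoc j k : Fin (w+1) → ℕ))
    (fun j => (Fin.init j : Fin w → ℕ))
  · -- maps to
    intro j hj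
    simp only [Finset.mem_filter, Fintype.mem_piFinset, Finset.mem_Icc] at hj ⊢
    obtain ⟨hmem, hch⟩ := hj
    refine ⟨?_, ?_, ?_⟩
    · intro a
      rcases Fin.eq_castSucc_or_eq_last a with ⟨i, rfl⟩ | rfl
      · rw [Fin.snoc_castSucc]
        have := hmem i
        constructor
        · exact this.1
        · split at this <;> omega
      · rw [Fin.snoc_last]
        exact ⟨hk1, hkN⟩
    · -- chain property of snoc
      intro m hm
      by_cases hmw : m + 1 < w
      · have e1 : (⟨m, Nat.lt_of_succ_lt hm⟩ : Fin (w+1)) = Fin.castSucc ⟨m, Nat.lt_of_succ_lt hmw⟩ := rfl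
        have e2 : (⟨m+1, hm⟩ : Fin (w+1)) = Fin.castSucc ⟨m+1, hmw⟩ := rfl
        rw [e1, e2, Fin.snoc_castSucc, Fin.snoc_castSucc]
        exact hch m hmw
      · -- m + 1 = w
        have hmw' : m + 1 = w := by omega
        have e2 : (⟨m+1, hm⟩ : Fin (w+1)) = Fin.last w := by
          ext; simp [hmw']
        have hmlt : m < w := by omega
        have e1 : (⟨m, Nat.lt_of_succ_lt hm⟩ : Fin (w+1)) = Fin.castSucc ⟨m, hmlt⟩ := rfl
        rw [e1, e2, Fin.snoc_castSucc, Fin.snoc_last]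
        have hjm := (hmem ⟨m, hmlt⟩).2
        constructor
        · split at hjm <;> omega
        · intro hwI
          rw [hmw'] at hwI
          rw [if_pos hwI] at hjm
          omega
    · -- last coordinate
      rw [Fin.snoc_last]
  · -- inverse maps to
    intro j hj
    simp only [Finset.mem_filter, Fintype.mem_piFinset, Finset.mem_Icc] at hj ⊢
    obtain ⟨hmem, hch, hlast⟩ := hj
    constructor
    · intro i
      have h1 : 1 ≤ Fin.init j i := (hmem i.castSucc).1
      have h2 : Fin.init j i ≤ k := by
        have := chain_mono hch w (by omega) i.val (by omega)
        have e : (⟨w, by omega⟩ : Fin (w+1)) = Fin.last w := rfl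
        rw [e, hlast] at this
        have e2 : (⟨i.val, by omega⟩ : Fin (w+1)) = i.castSucc := rfl
        rw [e2] at this
        exact this
      constructor
      · exact h1
      · split
        · -- w ∈ I : need init j i ≤ k - 1, i.e. j i.castSucc < k
          rename_i hwI
          -- j i.castSucc ≤ j ⟨w-1⟩ < j ⟨w⟩ = k
          have hw1 : 1 ≤ w := by
            rcases Nat.eq_zero_or_pos w with h | h
            · exact absurd i.isLt (by omega)
            · exact h
          have hstep := (hch (w-1) (by omega)).2 (by
            have : w - 1 + 1 = w := by omega
            rw [this]; exact hwI)
          have hle := chain_mono hch (w-1) (by omega) i.val (by omega)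
          have e3 : (⟨w-1+1, by omega⟩ : Fin (w+1)) = Fin.last w := by ext; simp; omega
          rw [e3, hlast] at hstep
          have e4 : (⟨i.val, by omega⟩ : Fin (w+1)) = i.castSucc := rfl
          rw [e4] at hle
          have : Fin.init j i = j i.castSucc := rfl
          omega
        · exact h2
    · -- chainP of init
      intro m hm
      have e1 : Fin.init j ⟨m, Nat.lt_of_succ_lt hm⟩ = j ⟨m, by omega⟩ := rfl
      have e2 : Fin.init j ⟨m+1, hm⟩ = j ⟨m+1, by omega⟩ := rfl
      rw [e1, e2]
      exact hch m (by omega)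
  · intro j _
    exact Fin.init_snoc (α := fun _ : Fin (w+1) => ℕ) k j
  · intro j hj
    simp only [Finset.mem_filter] at hj
    rw [← hj.2.2]
    exact Fin.snoc_init_self j
  · intro j _
    have h := Fin.prod_univ_castSucc (fun i : Fin (w+1) => G i ((Fin.snoc j k : Fin (w+1) → ℕ) i))
    simp only [Fin.snoc_castSucc, Fin.snoc_last] at h
    rw [h]
    ring

lemma chain_sum_peel (I : Finset ℕ) (w N : ℕ) (G : Fin (w+1) → ℕ → ℂ) :
    ∑ j ∈ (Fintype.piFinset fun _ : Fin (w+1) => Finset.Icc 1 N).filter (chainP I (w+1)),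
      ∏ i, G i (j i)
    = ∑ k ∈ Finset.Icc 1 N, G (Fin.last w) k *
        ∑ j ∈ (Fintype.piFinset fun _ : Fin w => Finset.Icc 1 (if w ∈ I then k-1 else k)).filter
          (chainP I w),
        ∏ i, G i.castSucc (j i) := by
  rw [← Finset.sum_fiberwise_of_maps_to (g := fun j => j (Fin.last w))
    (t := Finset.Icc 1 N) (fun j hj => by
      simp only [Finset.mem_filter, Fintype.mem_piFinset] at hj
      exact hj.1 (Fin.last w))]
  apply Finset.sum_congr rfl
  intro k hk
  simp only [Finset.mem_Icc] at hk
  rw [Finset.filter_filter]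
  exact core_peel I w N k hk.1 hk.2 G
def Jset : List ℕ → Finset ℕ
  | [] => ∅
  | _ :: t => if t = [] then ∅ else insert t.sum (Jset t)

lemma sum_pos_of_ne_nil : ∀ (t : List ℕ), t ≠ [] → (∀ a ∈ t, 1 ≤ a) → 1 ≤ t.sum := by
  intro t ht hpos
  obtain ⟨a, t', rfl⟩ := List.exists_cons_of_ne_nil ht
  have := hpos a (List.mem_cons_self)
  simp only [List.sum_cons]
  omega

lemma Jset_bound : ∀ (t : List ℕ), (∀ a ∈ t, 1 ≤ a) →
    ∀ x ∈ Jset t, 1 ≤ x ∧ x + 1 ≤ t.sum := by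
  intro t
  induction t with
  | nil => intro _ x hx; simp [Jset] at hx
  | cons a t iht =>
    intro hpos x hx
    rw [Jset] at hx
    by_cases ht : t = []
    · rw [if_pos ht] at hx; simp at hx
    · rw [if_neg ht] at hx
      have ha : 1 ≤ a := hpos a (List.mem_cons_self)
      have hts : 1 ≤ t.sum := sum_pos_of_ne_nil t ht (fun b hb => hpos b (List.mem_cons_of_mem a hb))
      simp only [Finset.mem_insert] at hx
      rcases hx with rfl | hx
      · simp only [List.sum_cons]; omega
      · have := iht (fun b hb => hpos b (List.mem_cons_of_mem a hb)) x hx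
        simp only [List.sum_cons]
        omega

lemma Jset_bound' (a : ℕ) (t : List ℕ) (hpos : ∀ b ∈ t, 1 ≤ b) :
    ∀ x ∈ Jset (a :: t), 1 ≤ x ∧ x ≤ t.sum := by
  intro x hx
  rw [Jset] at hx
  by_cases ht : t = []
  · rw [if_pos ht] at hx; simp at hx
  · rw [if_neg ht] at hx
    simp only [Finset.mem_insert] at hx
    rcases hx with rfl | hx
    · exact ⟨sum_pos_of_ne_nil t ht hpos, le_rfl⟩
    · have := Jset_bound t hpos x hx
      omega

lemma bridgeW (q : ℂ) (I : Finset ℕ) (hI0 : 0 ∉ I) :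
    ∀ (μ : ℕ) (r : List ℕ), r.sum + r.length ≤ μ → (∀ a ∈ r, 1 ≤ a) →
    (∀ x, 1 ≤ x → x + 1 ≤ r.sum → (x ∈ I ↔ x ∈ Jset r)) →
    ∀ (wr : ℕ), wr = r.sum → ∀ (N : ℕ),
    ∑ j ∈ (Fintype.piFinset fun _ : Fin wr => Finset.Icc 1 N).filter (chainP I wr),
        ∏ i, q ^ (j i) / qint q (j i)
      = Wfun q r N := by
  intro μ
  induction μ with
  | zero =>
    intro r hμ hpos hinv wr hwr N
    have hr : r = [] := by
      cases r with
      | nil => rfl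
      | cons a t => simp at hμ
    subst hr
    simp only [List.sum_nil] at hwr
    subst hwr
    rw [show (Fintype.piFinset fun _ : Fin 0 => Finset.Icc 1 N).filter (chainP I 0)
        = {fun i : Fin 0 => i.elim0} from by
      ext j
      simp only [Finset.mem_filter, Fintype.mem_piFinset, Finset.mem_singleton]
      constructor
      · intro _; exact funext fun i => i.elim0
      · intro hj
        exact ⟨fun i => i.elim0, fun m hm => absurd hm (by omega)⟩]
    rw [Wfun]
    simp
  | succ μ ihμ =>
    intro r hμ hpos hinv wr hwr N
    cases r with
    | nil =>
      exact ihμ [] (by simp) hpos hinv wr hwr N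
    | cons a t =>
      have ha : 1 ≤ a := hpos a (List.mem_cons_self)
      have hpos' : ∀ b ∈ t, 1 ≤ b := fun b hb => hpos b (List.mem_cons_of_mem a hb)
      have hw1 : 1 ≤ wr := by
        rw [hwr]; simp only [List.sum_cons]; omega
      obtain ⟨w₀, rfl⟩ : ∃ w₀, wr = w₀ + 1 := ⟨wr - 1, by omega⟩
      have hw₀ : w₀ + 1 = a + t.sum := by
        rw [hwr]; simp [List.sum_cons]
      rw [chain_sum_peel I w₀ N (fun _ m => q ^ m / qint q m)]
      rw [Wfun]
      apply Finset.sum_congr rfl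
      intro k hk
      simp only [Finset.mem_Icc] at hk
      by_cases h2 : 2 ≤ a
      · -- weak branch : w₀ ∉ I
        have hw₀sum : w₀ = ((a-1) :: t).sum := by simp only [List.sum_cons]; omega
        have hnotJ : w₀ ∉ Jset (a :: t) := by
          intro hmem
          have := Jset_bound' a t hpos' w₀ hmem
          omega
        have hnotI : w₀ ∉ I := by
          intro hmem
          rcases Nat.eq_zero_or_pos w₀ with h0 | h0
          · exact hI0 (h0 ▸ hmem)
          · exact hnotJ ((hinv w₀ h0 (by simp only [List.sum_cons]; omega)).1 hmem)
        rw [if_neg hnotI, dif_pos h2]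
        have hinv' : ∀ x, 1 ≤ x → x + 1 ≤ ((a-1)::t).sum → (x ∈ I ↔ x ∈ Jset ((a-1)::t)) := by
          intro x hx1 hx2
          simp only [List.sum_cons] at hx2
          rw [hinv x hx1 (by simp only [List.sum_cons]; omega)]
          rw [Jset, Jset]
        have hμ' : ((a-1)::t).sum + ((a-1)::t).length ≤ μ := by
          simp only [List.sum_cons, List.length_cons] at hμ ⊢
          omega
        rw [ihμ ((a-1)::t) hμ'
          (by intro b hb
              rcases List.mem_cons.1 hb with rfl | hb
              · omega
              · exact hpos' b hb) hinv' w₀ hw₀sum k]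
      · -- a = 1 : strict branch
        have ha1 : a = 1 := by omega
        subst ha1
        have hw₀t : w₀ = t.sum := by omega
        by_cases ht : t = []
        · subst ht
          simp only [List.sum_nil] at hw₀t
          subst hw₀t
          rw [if_neg hI0, dif_neg h2]
          have h1 := ihμ [] (by simp) (by simp) (fun x hx1 hx2 => by simp at hx2) 0 rfl k
          rw [h1]
          rw [show Wfun q [] k = 1 from by rw [Wfun], show Wfun q [] (k-1) = 1 from by rw [Wfun]]
        · have htsum : 1 ≤ t.sum := sum_pos_of_ne_nil t ht hpos'
          have hinI : w₀ ∈ I := by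
            rw [hinv w₀ (by omega) (by simp only [List.sum_cons]; omega)]
            rw [Jset, if_neg ht]
            rw [hw₀t]
            exact Finset.mem_insert_self _ _
          rw [if_pos hinI, dif_neg h2]
          have hinv' : ∀ x, 1 ≤ x → x + 1 ≤ t.sum → (x ∈ I ↔ x ∈ Jset t) := by
            intro x hx1 hx2
            rw [hinv x hx1 (by simp only [List.sum_cons]; omega)]
            rw [Jset, if_neg ht]
            simp only [Finset.mem_insert]
            constructor
            · rintro (rfl | h)
              · omega
              · exact h
            · intro h; right; exact h
          have hμ' : t.sum + t.length ≤ μ := by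
            simp only [List.sum_cons, List.length_cons] at hμ
            omega
          rw [ihμ t hμ' hpos' hinv' w₀ hw₀t (k-1)]
lemma bridgeA (q : ℂ) (I : Finset ℕ) (hI0 : 0 ∉ I)
    (r : List ℕ) (hr : r ≠ []) (hpos : ∀ a ∈ r, 1 ≤ a)
    (hinv : ∀ x, 1 ≤ x → x + 1 ≤ r.sum → (x ∈ I ↔ x ∈ Jset r))
    (wr : ℕ) (hwr : wr = r.sum) (hw1 : 1 ≤ wr) (n k : ℕ) (hk1 : 1 ≤ k) (hkn : k ≤ n) :
    ∑ j ∈ (Fintype.piFinset fun _ : Fin wr => Finset.Icc 1 n).filter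
        (fun j => chainP I wr j ∧ j ⟨wr - 1, by omega⟩ = k),
      ∏ i, q ^ (j i) / qint q (j i)
    = Afun q r k := by
  obtain ⟨a, t, rfl⟩ := List.exists_cons_of_ne_nil hr
  have ha : 1 ≤ a := hpos a (List.mem_cons_self)
  have hpos' : ∀ b ∈ t, 1 ≤ b := fun b hb => hpos b (List.mem_cons_of_mem a hb)
  obtain ⟨w₀, rfl⟩ : ∃ w₀, wr = w₀ + 1 := ⟨wr - 1, by omega⟩
  have hidx : (⟨w₀ + 1 - 1, by omega⟩ : Fin (w₀+1)) = Fin.last w₀ := by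
    ext; simp
  have hfil : (Fintype.piFinset fun _ : Fin (w₀+1) => Finset.Icc 1 n).filter
        (fun j => chainP I (w₀+1) j ∧ j ⟨w₀ + 1 - 1, by omega⟩ = k)
      = (Fintype.piFinset fun _ : Fin (w₀+1) => Finset.Icc 1 n).filter
        (fun j => chainP I (w₀+1) j ∧ j (Fin.last w₀) = k) :=
    Finset.filter_congr (fun j _ => by rw [hidx])
  rw [hfil, core_peel I w₀ n k hk1 hkn (fun _ m => q ^ m / qint q m)]
  rw [Afun]
  have hw₀ : w₀ + 1 = a + t.sum := by rw [hwr]; simp [List.sum_cons]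
  by_cases h2 : 2 ≤ a
  · have hw₀sum : w₀ = ((a-1) :: t).sum := by simp only [List.sum_cons]; omega
    have hnotJ : w₀ ∉ Jset (a :: t) := by
      intro hmem
      have := Jset_bound' a t hpos' w₀ hmem
      omega
    have hnotI : w₀ ∉ I := by
      intro hmem
      rcases Nat.eq_zero_or_pos w₀ with h0 | h0
      · exact hI0 (h0 ▸ hmem)
      · exact hnotJ ((hinv w₀ h0 (by simp only [List.sum_cons]; omega)).1 hmem)
    rw [if_neg hnotI, if_pos h2]
    have hinv' : ∀ x, 1 ≤ x → x + 1 ≤ ((a-1)::t).sum → (x ∈ I ↔ x ∈ Jset ((a-1)::t)) := by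
      intro x hx1 hx2
      simp only [List.sum_cons] at hx2
      rw [hinv x hx1 (by simp only [List.sum_cons]; omega)]
      rw [Jset, Jset]
    rw [bridgeW q I hI0 (((a-1)::t).sum + ((a-1)::t).length) ((a-1)::t) le_rfl
      (by intro b hb
          rcases List.mem_cons.1 hb with rfl | hb
          · omega
          · exact hpos' b hb) hinv' w₀ hw₀sum k]
  · have ha1 : a = 1 := by omega
    subst ha1
    have hw₀t : w₀ = t.sum := by omega
    by_cases ht : t = []
    · subst ht
      simp only [List.sum_nil] at hw₀t
      subst hw₀t
      rw [if_neg hI0, if_neg h2]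
      rw [bridgeW q I hI0 0 [] (by simp) (by simp) (fun x hx1 hx2 => by simp at hx2) 0 rfl k]
      rw [show Wfun q [] k = 1 from by rw [Wfun], show Wfun q [] (k-1) = 1 from by rw [Wfun]]
    · have htsum : 1 ≤ t.sum := sum_pos_of_ne_nil t ht hpos'
      have hinI : w₀ ∈ I := by
        rw [hinv w₀ (by omega) (by simp only [List.sum_cons]; omega)]
        rw [Jset, if_neg ht, hw₀t]
        exact Finset.mem_insert_self _ _
      rw [if_pos hinI, if_neg h2]
      have hinv' : ∀ x, 1 ≤ x → x + 1 ≤ t.sum → (x ∈ I ↔ x ∈ Jset t) := by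
        intro x hx1 hx2
        rw [hinv x hx1 (by simp only [List.sum_cons]; omega)]
        rw [Jset, if_neg ht]
        simp only [Finset.mem_insert]
        constructor
        · rintro (rfl | h)
          · omega
          · exact h
        · intro h; right; exact h
      rw [bridgeW q I hI0 (t.sum + t.length) t le_rfl hpos' hinv' w₀ hw₀t (k-1)]

lemma chainP_iff_strictMono (I : Finset ℕ) (w : ℕ)
    (hI : ∀ m, 1 ≤ m → m + 1 ≤ w → m ∈ I) (j : Fin w → ℕ) :
    chainP I w j ↔ StrictMono j := by
  constructor
  · intro h a b hab
    have hb1 : 1 ≤ b.val := by omega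
    have hstep := (h (b.val - 1) (by omega)).2 (by
      have e : b.val - 1 + 1 = b.val := by omega
      rw [e]
      exact hI b.val hb1 (by omega))
    have hle := chain_mono h (b.val - 1) (by omega) a.val (by omega)
    have e1 : (⟨a.val, by omega⟩ : Fin w) = a := by ext; rfl
    have e2 : (⟨b.val - 1 + 1, by omega⟩ : Fin w) = b := by ext; simp; omega
    rw [e1] at hle
    rw [e2] at hstep
    omega
  · intro h m hm
    have hlt : (⟨m, Nat.lt_of_succ_lt hm⟩ : Fin w) < ⟨m+1, hm⟩ := by
      simp [Fin.lt_def]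
    have := h hlt
    exact ⟨le_of_lt this, fun _ => this⟩
lemma fin0_sum (S : Finset ℕ) (P : (Fin 0 → ℕ) → Prop) [DecidablePred P] (F : (Fin 0 → ℕ) → ℂ)
    (hP : P (fun i => i.elim0)) (hF : F (fun i => i.elim0) = 1) :
    ∑ j ∈ (Fintype.piFinset fun _ : Fin 0 => S).filter P, F j = 1 := by
  rw [show (Fintype.piFinset fun _ : Fin 0 => S).filter P = {fun i : Fin 0 => i.elim0} from by
    ext j
    simp only [Finset.mem_filter, Fintype.mem_piFinset, Finset.mem_singleton]
    constructor
    · intro _; exact funext fun i => i.elim0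
    · intro hj
      have : j = fun i : Fin 0 => i.elim0 := funext fun i => i.elim0
      subst this
      exact ⟨fun i => i.elim0, hP⟩]
  rw [Finset.sum_singleton, hF]

lemma list_rev_range (s : ℕ → ℕ) (l : ℕ) :
    ((List.range (l+1)).map s).reverse = s l :: ((List.range l).map s).reverse := by
  rw [List.range_succ, List.map_append, List.reverse_append]
  simp

lemma Jset_reverse (s : ℕ → ℕ) : ∀ l : ℕ,
    Jset (((List.range l).map s).reverse)
      = (Finset.range (l-1)).image (fun t => ∑ i ∈ Finset.range (t+1), s i) := by
  intro l
  induction l with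
  | zero => simp [Jset]
  | succ l ih =>
    rw [list_rev_range s l, Jset]
    by_cases hl : l = 0
    · subst hl
      rw [if_pos (by simp)]
      simp
    · rw [if_neg (by
        intro hc
        have := congrArg List.length hc
        simp at this
        exact hl this)]
      rw [ih]
      have hsum : (((List.range l).map s).reverse).sum = ∑ i ∈ Finset.range l, s i := by
        rw [List.sum_reverse]; rfl
      rw [hsum]
      obtain ⟨l', rfl⟩ : ∃ l', l = l'+1 := ⟨l-1, by omega⟩
      simp only [Nat.add_sub_cancel]
      rw [Finset.range_add_one, Finset.image_insert, ← Finset.range_add_one]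

lemma bridgeR (q : ℂ) (s : ℕ → ℕ) : ∀ (l : ℕ) (n : ℕ),
    ∑ f ∈ (Fintype.piFinset fun _ : Fin l => Finset.Icc 1 n).filter (fun f => StrictMono f),
        ∏ i : Fin l, q ^ ((s i.val - 1) * f i) / (qint q (f i)) ^ (s i.val)
      = Rfun q (((List.range l).map s).reverse) n := by
  intro l
  induction l with
  | zero =>
    intro n
    have h1 := fin0_sum (Finset.Icc 1 n) (fun f : Fin 0 → ℕ => StrictMono f)
      (fun f => ∏ i : Fin 0, q ^ ((s i.val - 1) * f i) / (qint q (f i)) ^ (s i.val))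
      (fun a b h => a.elim0) (by simp)
    have h2 : Rfun q ((List.range 0).map s).reverse n = 1 := by
      rw [show ((List.range 0).map s).reverse = [] from rfl, Rfun]
    exact h1.trans h2.symm
  | succ l ih =>
    intro n
    rw [list_rev_range s l, Rfun]
    have hfil : (Fintype.piFinset fun _ : Fin (l+1) => Finset.Icc 1 n).filter
          (fun f => StrictMono f)
        = (Fintype.piFinset fun _ : Fin (l+1) => Finset.Icc 1 n).filter
          (chainP (Finset.Icc 1 (l+1)) (l+1)) :=
      Finset.filter_congr (fun j _ => (chainP_iff_strictMono _ _
        (fun m h1 h2 => Finset.mem_Icc.2 ⟨h1, by omega⟩) j).symm)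
    rw [hfil, chain_sum_peel (Finset.Icc 1 (l+1)) l n
      (fun i m => q ^ ((s i.val - 1) * m) / (qint q m) ^ (s i.val))]
    apply Finset.sum_congr rfl
    intro k hk
    simp only [Finset.mem_Icc] at hk
    simp only [Fin.val_last, Fin.coe_castSucc]
    congr 1
    by_cases hl : 1 ≤ l
    · rw [if_pos (Finset.mem_Icc.2 ⟨hl, by omega⟩)]
      have hfil2 : (Fintype.piFinset fun _ : Fin l => Finset.Icc 1 (k-1)).filter
            (chainP (Finset.Icc 1 (l+1)) l)
          = (Fintype.piFinset fun _ : Fin l => Finset.Icc 1 (k-1)).filter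
            (fun f => StrictMono f) :=
        Finset.filter_congr (fun j _ => chainP_iff_strictMono _ _
          (fun m h1 h2 => Finset.mem_Icc.2 ⟨h1, by omega⟩) j)
      rw [hfil2]
      exact ih (k-1)
    · have hl0 : l = 0 := by omega
      subst hl0
      rw [if_neg (by simp)]
      have h1 := fin0_sum (Finset.Icc 1 k) (chainP (Finset.Icc 1 (0+1)) 0)
        (fun j => ∏ i : Fin 0, q ^ ((s i.val - 1) * j i) / (qint q (j i)) ^ (s i.val))
        (fun m hm => absurd hm (by omega)) (by simp)
      have h2 : Rfun q ((List.range 0).map s).reverse (k-1) = 1 := by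
        rw [show ((List.range 0).map s).reverse = [] from rfl, Rfun]
      exact h1.trans h2.symm

theorem stmt_8 (l : ℕ) (hl : 1 ≤ l) (s : ℕ → ℕ) (hs : ∀ i < l, 1 ≤ s i)
    (w : ℕ) (hw : w = ∑ i ∈ Finset.range l, s i) (hw1 : 1 ≤ w)
    (I : Finset ℕ)
    (hI : I = (Finset.range (l - 1)).image fun t => ∑ i ∈ Finset.range (t + 1), s i)
    (n : ℕ) (hn : 1 ≤ n) (q : ℂ) (hq0 : q ≠ 0)
    (hq : ∀ i, 1 ≤ i → i ≤ n → q ^ i ≠ 1) :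
    ∑ k ∈ Finset.Icc 1 n,
        qbinom q n k * (-1) ^ k * q ^ ((Nat.choose k 2 : ℤ) - (n : ℤ) * k) *
          ∑ j ∈ (Fintype.piFinset fun _ : Fin w => Finset.Icc 1 n).filter
            (fun j => (∀ (m : ℕ) (hm : m + 1 < w),
              j ⟨m, Nat.lt_of_succ_lt hm⟩ ≤ j ⟨m + 1, hm⟩ ∧
                ((m + 1) ∈ I → j ⟨m, Nat.lt_of_succ_lt hm⟩ < j ⟨m + 1, hm⟩)) ∧
              j ⟨w - 1, by omega⟩ = k),
            ∏ i : Fin w, q ^ (j i) / qint q (j i)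
      = (-1) ^ l *
          ∑ f ∈ (Fintype.piFinset fun _ : Fin l => Finset.Icc 1 n).filter
            (fun f => StrictMono f),
            ∏ i : Fin l, q ^ ((s i.val - 1) * f i) / (qint q (f i)) ^ (s i.val) := by
  have hrnil : ((List.range l).map s).reverse ≠ [] := by
    intro hc
    have := congrArg List.length hc
    simp at this
    omega
  have hrpos : ∀ a ∈ ((List.range l).map s).reverse, 1 ≤ a := by
    intro a ha
    rw [List.mem_reverse, List.mem_map] at ha
    obtain ⟨i, hi, rfl⟩ := ha
    exact hs i (List.mem_range.mp hi)
  have hSum : ((List.range l).map s).reverse.sum = w := by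
    rw [List.sum_reverse, hw]
    rfl
  have hLen : ((List.range l).map s).reverse.length = l := by simp
  have hI0 : (0:ℕ) ∉ I := by
    rw [hI]
    simp only [Finset.mem_image, Finset.mem_range]
    rintro ⟨t, ht, hc⟩
    have h0l : 0 < l := by omega
    have hs0 : s 0 = 0 :=
      (Finset.sum_eq_zero_iff.mp hc) 0 (Finset.mem_range.mpr (by omega))
    have := hs 0 h0l
    omega
  have hJI : ∀ x, 1 ≤ x → x + 1 ≤ ((List.range l).map s).reverse.sum →
      (x ∈ I ↔ x ∈ Jset ((List.range l).map s).reverse) := by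
    intro x _ _
    rw [hI, Jset_reverse s l]
  have hL : (∑ k ∈ Finset.Icc 1 n,
        qbinom q n k * (-1) ^ k * q ^ ((Nat.choose k 2 : ℤ) - (n : ℤ) * k) *
          ∑ j ∈ (Fintype.piFinset fun _ : Fin w => Finset.Icc 1 n).filter
            (fun j => (∀ (m : ℕ) (hm : m + 1 < w),
              j ⟨m, Nat.lt_of_succ_lt hm⟩ ≤ j ⟨m + 1, hm⟩ ∧
                ((m + 1) ∈ I → j ⟨m, Nat.lt_of_succ_lt hm⟩ < j ⟨m + 1, hm⟩)) ∧
              j ⟨w - 1, by omega⟩ = k),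
            ∏ i : Fin w, q ^ (j i) / qint q (j i))
      = ∑ k ∈ Finset.Icc 1 n,
          (-1:ℂ)^k * qbinom q n k * q ^ e0 n k * Afun q ((List.range l).map s).reverse k := by
    apply Finset.sum_congr rfl
    intro k hk
    simp only [Finset.mem_Icc] at hk
    have hfc : (Fintype.piFinset fun _ : Fin w => Finset.Icc 1 n).filter
          (fun j => (∀ (m : ℕ) (hm : m + 1 < w),
            j ⟨m, Nat.lt_of_succ_lt hm⟩ ≤ j ⟨m + 1, hm⟩ ∧
              ((m + 1) ∈ I → j ⟨m, Nat.lt_of_succ_lt hm⟩ < j ⟨m + 1, hm⟩)) ∧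
            j ⟨w - 1, by omega⟩ = k)
        = (Fintype.piFinset fun _ : Fin w => Finset.Icc 1 n).filter
          (fun j => chainP I w j ∧ j ⟨w - 1, by omega⟩ = k) :=
      Finset.filter_congr (fun j _ => Iff.rfl)
    rw [hfc, bridgeA q I hI0 _ hrnil hrpos hJI w hSum.symm (by omega) n k hk.1 hk.2]
    rw [show e0 n k = (Nat.choose k 2 : ℤ) - (n:ℤ)*k from rfl]
    ring
  rw [hL,
    show (∑ k ∈ Finset.Icc 1 n,
        (-1:ℂ)^k * qbinom q n k * q ^ e0 n k * Afun q ((List.range l).map s).reverse k)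
      = Lfun q ((List.range l).map s).reverse n from rfl,
    main_lemma q hq0 n hq _ hrnil hrpos, hLen, ← bridgeR q s l n]
end

section
/- Let p be a prime and s_1,…,s_l, t_1,…,t_l be non-negative integers with each s_j ≥ 1. Then modulo [p]_q, the multiple q-harmonic sum H_{p-1}^q(s_1,…,s_l; t_1,…,t_l) = ∑_{1≤k_1<⋯<k_l≤p-1} q^{t_1k_1+⋯+t_lk_l}/([k_1]_q^{s_1}⋯[k_l]_q^{s_l}) is congruent to (-1)^{s_1+⋯+s_l} H_{p-1}^q(s_l,…,s_1; s_l-t_l,…,s_1-t_1). -/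
open scoped Classical

/-- The multiple `q`-harmonic sum
`H_n^q(s_0,…,s_{l-1}; t_0,…,t_{l-1}) = ∑_{1≤k_0<⋯<k_{l-1}≤n} ∏_i q^{t_i k_i}/[k_i]_q^{s_i}`,
with integer exponent weights `t`. -/
noncomputable def qMHS (q : ℂ) (n l : ℕ) (s : ℕ → ℕ) (t : ℕ → ℤ) : ℂ :=
  ∑ k ∈ (Fintype.piFinset fun _ : Fin l => Finset.Icc 1 n).filter
      (fun k => StrictMono k),
    ∏ i : Fin l, q ^ (t i.val * (k i : ℤ)) / (qint q (k i)) ^ (s i.val)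

/-- Reversal congruence `H_{p-1}^q(s;t) ≡ (-1)^{w(s)} H_{p-1}^q(s̄; s̄ - t̄) (mod [p]_q)`,
expressed as an equality at any primitive `p`-th root of unity `ζ`. -/
theorem stmt_10 (p : ℕ) (hp : p.Prime) (l : ℕ) (s : ℕ → ℕ) (t : ℕ → ℤ)
    (hs : ∀ i < l, 1 ≤ s i) (ht : ∀ i < l, 0 ≤ t i)
    (ζ : ℂ) (hζ : IsPrimitiveRoot ζ p) :
    qMHS ζ (p - 1) l s t
      = (-1) ^ (∑ i ∈ Finset.range l, s i) *
        qMHS ζ (p - 1) l (fun i => s (l - 1 - i))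
          (fun i => (s (l - 1 - i) : ℤ) - t (l - 1 - i)) := by
  classical
  have hp2 : 2 ≤ p := hp.two_le
  have hζ0 : ζ ≠ 0 := hζ.ne_zero hp.pos.ne'
  have hζ1 : ζ ≠ 1 := hζ.ne_one hp.one_lt
  have hζp : ζ ^ p = 1 := hζ.pow_eq_one
  have hζpz : ζ ^ (p : ℤ) = 1 := by rw [zpow_natCast, hζp]
  have hq : ∀ k : ℕ, 1 ≤ k → k ≤ p - 1 → qint ζ k ≠ 0 := by
    intro k h1 h2
    have hk : ζ ^ k ≠ 1 := hζ.pow_ne_one_of_pos_of_lt (by omega) (by omega)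
    simp only [qint, div_ne_zero_iff, sub_ne_zero]
    exact ⟨fun h => hk h.symm, fun h => hζ1 h.symm⟩
  -- key per-factor identity
  have key : ∀ (a b : ℕ) (ti : ℤ), 1 ≤ a → a ≤ p - 1 →
      ζ ^ (((b : ℤ) - ti) * ((p - a : ℕ) : ℤ)) / (qint ζ (p - a)) ^ b
        = (-1 : ℂ) ^ b * (ζ ^ (ti * (a : ℤ)) / (qint ζ a) ^ b) := by
    intro a b ti h1 h2
    have hpa : ((p - a : ℕ) : ℤ) = (p : ℤ) - a := by
      have : a ≤ p := by omega
      push_cast [Nat.cast_sub this]; ring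
    have h1ζ : (1 : ℂ) - ζ ≠ 0 := sub_ne_zero.mpr (fun h => hζ1 h.symm)
    have hza : ζ ^ a ≠ 0 := pow_ne_zero _ hζ0
    have hqrev : qint ζ (p - a) = -ζ ^ (-(a : ℤ)) * qint ζ a := by
      have hmul : ζ ^ (p - a) * ζ ^ a = 1 := by
        rw [← pow_add]
        have h : p - a + a = p := by omega
        rw [h, hζp]
      have hzpa : ζ ^ (p - a) = (ζ ^ a)⁻¹ := eq_inv_of_mul_eq_one_left hmul
      unfold qint
      rw [hzpa, zpow_neg, zpow_natCast]
      field_simp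
      ring
    have hexp : ζ ^ (((b : ℤ) - ti) * ((p - a : ℕ) : ℤ))
        = ζ ^ (ti * (a : ℤ)) * ζ ^ (-(b : ℤ) * a) := by
      rw [hpa, ← zpow_add₀ hζ0]
      have h : ((b : ℤ) - ti) * ((p : ℤ) - a)
          = (p : ℤ) * ((b : ℤ) - ti) + (ti * a + -(b : ℤ) * a) := by ring
      rw [h, zpow_add₀ hζ0, zpow_mul, hζpz, one_zpow, one_mul]
    have hqa : qint ζ a ≠ 0 := hq a h1 h2
    rw [hexp, hqrev]
    have h1' : ζ ^ (-(b : ℤ) * a) = (ζ ^ (-(a : ℤ))) ^ b := by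
      rw [← zpow_natCast (ζ ^ (-(a : ℤ))) b, ← zpow_mul]; ring_nf
    rw [mul_pow, neg_pow, h1']
    have hza : (ζ ^ (-(a : ℤ))) ^ b ≠ 0 := pow_ne_zero _ (zpow_ne_zero _ hζ0)
    have hqb : (qint ζ a) ^ b ≠ 0 := pow_ne_zero _ hqa
    have hneg : ((-1 : ℂ)) ^ b ≠ 0 := pow_ne_zero _ (by norm_num)
    field_simp
    have hone : ((-1 : ℂ)) ^ b * (-1) ^ b = 1 := by
      rw [← mul_pow]; norm_num
    rw [sq, hone]
  -- now the reindexing bijection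
  unfold qMHS
  rw [Finset.mul_sum]
  refine Finset.sum_nbij' (fun k => fun i : Fin l => p - k i.rev)
    (fun k => fun i : Fin l => p - k i.rev) ?_ ?_ ?_ ?_ ?_
  · intro k hk
    rw [Finset.mem_filter, Fintype.mem_piFinset] at hk ⊢
    constructor
    · intro i
      have h := hk.1 i.rev
      rw [Finset.mem_Icc] at h
      show p - k i.rev ∈ Finset.Icc 1 (p - 1)
      rw [Finset.mem_Icc]
      omega
    · intro i j hij
      have h1 : j.rev < i.rev := Fin.rev_lt_rev.mpr hij
      have h2 := hk.2 h1
      have b1 := hk.1 i.rev; have b2 := hk.1 j.rev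
      rw [Finset.mem_Icc] at b1 b2
      show p - k i.rev < p - k j.rev
      omega
  · intro k hk
    rw [Finset.mem_filter, Fintype.mem_piFinset] at hk ⊢
    constructor
    · intro i
      have h := hk.1 i.rev
      rw [Finset.mem_Icc] at h
      show p - k i.rev ∈ Finset.Icc 1 (p - 1)
      rw [Finset.mem_Icc]
      omega
    · intro i j hij
      have h1 : j.rev < i.rev := Fin.rev_lt_rev.mpr hij
      have h2 := hk.2 h1
      have b1 := hk.1 i.rev; have b2 := hk.1 j.rev
      rw [Finset.mem_Icc] at b1 b2
      show p - k i.rev < p - k j.rev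
      omega
  · intro k hk
    rw [Finset.mem_filter, Fintype.mem_piFinset] at hk
    funext i
    have := hk.1 i
    rw [Finset.mem_Icc] at this
    simp only [Fin.rev_rev]
    omega
  · intro k hk
    rw [Finset.mem_filter, Fintype.mem_piFinset] at hk
    funext i
    have := hk.1 i
    rw [Finset.mem_Icc] at this
    simp only [Fin.rev_rev]
    omega
  · intro k hk
    rw [Finset.mem_filter, Fintype.mem_piFinset] at hk
    -- first reindex the RHS product by `Fin.rev`
    have hre : (∏ i : Fin l,
        ζ ^ (((s (l - 1 - (i : ℕ)) : ℤ) - t (l - 1 - (i : ℕ))) *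
          (((p - k i.rev : ℕ)) : ℤ)) /
          (qint ζ (p - k i.rev)) ^ (s (l - 1 - (i : ℕ))))
        = ∏ i : Fin l,
        ζ ^ (((s (i : ℕ) : ℤ) - t (i : ℕ)) * (((p - k i : ℕ)) : ℤ)) /
          (qint ζ (p - k i)) ^ (s (i : ℕ)) := by
      refine Fintype.prod_equiv (Fin.revPerm) _ _ ?_
      intro i
      have hv : l - 1 - (i : ℕ) = ((i.rev : Fin l) : ℕ) := by
        rw [Fin.val_rev]; omega
      simp only [Fin.revPerm_apply, Fin.rev_rev, hv]
    rw [hre]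
    have hterm : ∀ i : Fin l,
        ζ ^ (((s (i : ℕ) : ℤ) - t (i : ℕ)) * (((p - k i : ℕ)) : ℤ)) /
          (qint ζ (p - k i)) ^ (s (i : ℕ))
        = (-1 : ℂ) ^ (s (i : ℕ)) *
          (ζ ^ (t (i : ℕ) * ((k i : ℕ) : ℤ)) / (qint ζ (k i)) ^ (s (i : ℕ))) := by
      intro i
      have := hk.1 i
      rw [Finset.mem_Icc] at this
      exact key (k i) (s (i : ℕ)) (t (i : ℕ)) this.1 this.2
    rw [Finset.prod_congr rfl (fun i _ => hterm i), Finset.prod_mul_distrib,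
      Finset.prod_pow_eq_pow_sum]
    rw [show (∑ i : Fin l, s (i : ℕ)) = ∑ i ∈ Finset.range l, s i from
      Fin.sum_univ_eq_sum_range (fun i => s i) l]
    have hone : ((-1 : ℂ)) ^ (∑ i ∈ Finset.range l, s i) *
        (-1) ^ (∑ i ∈ Finset.range l, s i) = 1 := by
      rw [← mul_pow]; norm_num
    rw [← mul_assoc, hone, one_mul]
end

section
/- For positive integers n, s_1, s_2, the product of single q-harmonic sums satisfies the identity H_n^q(s_1) H_n^q(s_2) = H_n^q(s_1,s_2) + H_n^q(s_2,s_1) + H_n^q(s_1+s_2) + (1-q) H_n^q(s_1+s_2-1), where H_n^q(s) = ∑_{k=1}^n q^{(s-1)k}/[k]_q^s and H_n^q(a,b) = ∑_{1≤j<k≤n} q^{(a-1)j+(b-1)k}/([j]_q^a [k]_q^b). -/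
/-- The single `q`-harmonic sum `H_n^q(s) = ∑_{k=1}^n q^{(s-1)k}/[k]_q^s`. -/
noncomputable def qH1 (q : ℂ) (n s : ℕ) : ℂ :=
  ∑ k ∈ Finset.Icc 1 n, q ^ ((s - 1) * k) / (qint q k) ^ s

/-- The depth-two `q`-harmonic sum `H_n^q(a,b) = ∑_{1≤j<k≤n} q^{(a-1)j+(b-1)k}/([j]_q^a [k]_q^b)`. -/
noncomputable def qH2 (q : ℂ) (n a b : ℕ) : ℂ :=
  ∑ k ∈ Finset.Icc 1 n, ∑ j ∈ Finset.Icc 1 (k - 1),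
    q ^ ((a - 1) * j + (b - 1) * k) / ((qint q j) ^ a * (qint q k) ^ b)

lemma qH1_succ (q : ℂ) (n s : ℕ) :
    qH1 q (n+1) s = qH1 q n s + q ^ ((s-1)*(n+1)) / (qint q (n+1)) ^ s := by
  rw [qH1, Finset.sum_Icc_succ_top (Nat.le_add_left 1 n)]; rfl

lemma qH2_succ (q : ℂ) (n a b : ℕ) :
    qH2 q (n+1) a b = qH2 q n a b
      + qH1 q n a * (q ^ ((b-1)*(n+1)) / (qint q (n+1)) ^ b) := by
  rw [qH2, Finset.sum_Icc_succ_top (Nat.le_add_left 1 n)]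
  congr 1
  simp only [Nat.add_sub_cancel]
  rw [qH1, Finset.sum_mul]
  apply Finset.sum_congr rfl
  intro j hj
  rw [div_mul_div_comm, ← pow_add]

lemma qdiag (q : ℂ) (m a b : ℕ) (hD : qint q m ≠ 0) (h1q : (1:ℂ) - q ≠ 0) :
    q ^ (a*m) / (qint q m) ^ (a+1) * (q ^ (b*m) / (qint q m) ^ (b+1))
      = q ^ ((a+b+1)*m) / (qint q m) ^ (a+b+2)
        + (1-q) * (q ^ ((a+b)*m) / (qint q m) ^ (a+b+1)) := by
  have hqm : (1-q) * qint q m = 1 - q ^ m := by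
    rw [qint]; field_simp
  field_simp
  ring_nf
  linear_combination (-(q^(a*m) * q^(m*b) * qint q m ^ 3
    * qint q m ^ (a*2) * qint q m ^ (b*2))) * hqm

theorem stmt_13 (n s₁ s₂ : ℕ) (hn : 1 ≤ n) (hs₁ : 1 ≤ s₁) (hs₂ : 1 ≤ s₂) (q : ℂ)
    (hq : ∀ i, 1 ≤ i → i ≤ n → q ^ i ≠ 1) :
    qH1 q n s₁ * qH1 q n s₂
      = qH2 q n s₁ s₂ + qH2 q n s₂ s₁ + qH1 q n (s₁ + s₂)
        + (1 - q) * qH1 q n (s₁ + s₂ - 1) := by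
  obtain ⟨a, rfl⟩ : ∃ a, s₁ = a + 1 := ⟨s₁ - 1, by omega⟩
  obtain ⟨b, rfl⟩ : ∃ b, s₂ = b + 1 := ⟨s₂ - 1, by omega⟩
  clear hn hs₁ hs₂
  revert hq
  induction n with
  | zero => intro _; simp [qH1, qH2]
  | succ n ih =>
    intro hq
    have hq' : ∀ i, 1 ≤ i → i ≤ n → q ^ i ≠ 1 := fun i h1 h2 => hq i h1 (by omega)
    have h1q : (1:ℂ) - q ≠ 0 := by
      have h := hq 1 le_rfl (by omega)
      rw [pow_one] at h
      exact sub_ne_zero.mpr fun h' => h h'.symm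
    have hD : qint q (n+1) ≠ 0 := by
      rw [qint]
      exact div_ne_zero (sub_ne_zero.mpr fun h => hq (n+1) (by omega) le_rfl h.symm) h1q
    have IH := ih hq'
    have key := qdiag q (n+1) a b hD h1q
    simp only [show a+1+(b+1) = a+b+2 from by omega] at IH ⊢
    rw [qH1_succ q n (a+1), qH1_succ q n (b+1), qH1_succ q n (a+b+2),
      qH1_succ q n (a+b+2-1), qH2_succ, qH2_succ]
    simp only [Nat.add_sub_cancel, show a+b+2-1 = a+b+1 from rfl] at *
    linear_combination IH + key
end
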